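/- arXiv:2210.04348 — 7 statements merged into one kernel-verified Lean document; each statement's English description precedes it below -/
import Mathlib

section
/- Let $D$ be a Hausdorff topological space, $f, g, h : D \to \mathbb{R} \cup \{-\infty\}$ upper semicontinuous functions, and $\emptyset \neq A \subseteq B \subseteq D$ with $A$ compact. If $f(t) < g(t)$ for all $t \in A$, and $h$ is not identically $-\infty$ on $A$, then $\max_A (f+h) < \sup_B (g+h)$. -/
open Set Filter

noncomputable section

/-- A kernel function: finite and concave on `(-1,0)` and `(0,1)`, with equal one-sided
limits at `0`, extended to `[-1,1]` (values in `ℝ ∪ {-∞}`, i.e. never `⊤`) by limits. -/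
def IsKernelFunction (K : ℝ → EReal) : Prop :=
  (∀ t ∈ Set.Icc (-1:ℝ) 1, K t ≠ ⊤) ∧
  (∀ t ∈ Set.Ioo (-1:ℝ) 0, K t ≠ ⊥) ∧
  (∀ t ∈ Set.Ioo (0:ℝ) 1, K t ≠ ⊥) ∧
  ConcaveOn ℝ (Set.Ioo (-1:ℝ) 0) (fun t => (K t).toReal) ∧
  ConcaveOn ℝ (Set.Ioo (0:ℝ) 1) (fun t => (K t).toReal) ∧
  Filter.Tendsto K (nhdsWithin 0 (Set.Iio 0)) (nhds (K 0)) ∧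
  Filter.Tendsto K (nhdsWithin 0 (Set.Ioi 0)) (nhds (K 0)) ∧
  Filter.Tendsto K (nhdsWithin (-1) (Set.Ioi (-1:ℝ))) (nhds (K (-1))) ∧
  Filter.Tendsto K (nhdsWithin 1 (Set.Iio (1:ℝ))) (nhds (K 1))

/-- Monotone kernel: non-increasing on `(-1,0)`, non-decreasing on `(0,1)`. -/
def IsMonotoneKernel (K : ℝ → EReal) : Prop :=
  IsKernelFunction K ∧ AntitoneOn K (Set.Ioo (-1:ℝ) 0) ∧ MonotoneOn K (Set.Ioo (0:ℝ) 1)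

/-- The closed simplex of node systems `0 ≤ y 0 ≤ ⋯ ≤ y (n-1) ≤ 1`. -/
def simplex (n : ℕ) : Set (Fin n → ℝ) :=
  {y | Monotone y ∧ ∀ i, y i ∈ Set.Icc (0:ℝ) 1}

/-- The `j`-th node of the node system `y`, with `node y 0 = 0` and `node y (n+1) = 1`. -/
def node {n : ℕ} (y : Fin n → ℝ) (j : ℕ) : ℝ :=
  if h : 1 ≤ j ∧ j ≤ n then y ⟨j - 1, by omega⟩ else if j = 0 then 0 else 1

/-- An `n`-field function: bounded above on `[0,1]`, with values in `ℝ ∪ {-∞}`, finite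
at more than `n` points of `[0,1]`, where `0` and `1` count with weight `1/2`. -/
def IsFieldFunction (n : ℕ) (J : ℝ → EReal) : Prop :=
  (∀ t ∈ Set.Icc (0:ℝ) 1, J t ≠ ⊤) ∧
  (∃ C : ℝ, ∀ t ∈ Set.Icc (0:ℝ) 1, J t ≤ (C : EReal)) ∧
  ∃ T : Finset ℝ, ↑T ⊆ Set.Icc (0:ℝ) 1 ∧ (∀ t ∈ T, J t ≠ ⊥) ∧
    (n : ℝ) < ∑ t ∈ T, (if t = 0 ∨ t = 1 then (1/2 : ℝ) else 1)

/-- The (weighted) sum of translates function `F(y,t) = J(t) + ∑ ν_j K(t - y_j)`. -/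
def Fsum {n : ℕ} (K : ℝ → EReal) (ν : Fin n → ℝ) (J : ℝ → EReal)
    (y : Fin n → ℝ) (t : ℝ) : EReal :=
  J t + ∑ j, (ν j : EReal) * K (t - y j)

/-- The `j`-th interval maximum `m_j(y) = sup_{t ∈ [y_j, y_{j+1}]} F(y,t)`. -/
def mj {n : ℕ} (K : ℝ → EReal) (ν : Fin n → ℝ) (J : ℝ → EReal)
    (y : Fin n → ℝ) (j : ℕ) : EReal :=
  sSup (Fsum K ν J y '' Set.Icc (node y j) (node y (j + 1)))

/-- The regularity set `Y`: node systems with all interval maxima `> -∞`. -/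
def regularitySet {n : ℕ} (K : ℝ → EReal) (ν : Fin n → ℝ) (J : ℝ → EReal) :
    Set (Fin n → ℝ) :=
  {y ∈ simplex n | ∀ j ≤ n, mj K ν J y j ≠ ⊥}

/-- Upper semicontinuous regularization of a function on `[0,1]`. -/
def uscReg (φ : ℝ → EReal) (t : ℝ) : EReal :=
  ⨅ (r : ℝ) (_ : 0 < r), sSup (φ '' (Set.Ioo (t - r) (t + r) ∩ Set.Icc 0 1))

/-- Upper semicontinuous regularization computed within a subset `A` of `[0,1]`. -/
def uscRegOn (A : Set ℝ) (φ : ℝ → EReal) (t : ℝ) : EReal :=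
  ⨅ (r : ℝ) (_ : 0 < r), sSup (φ '' (Set.Ioo (t - r) (t + r) ∩ A))

/-- An upper semicontinuous `EReal`-valued function attains its maximum on a nonempty
compact set. -/
lemma usc_exists_max {D : Type*} [TopologicalSpace D] {q : D → EReal}
    (hq : UpperSemicontinuous q) {A : Set D} (hA : IsCompact A) (hAne : A.Nonempty) :
    ∃ t₀ ∈ A, ∀ t ∈ A, q t ≤ q t₀ := by
  by_contra hcon
  push_neg at hcon
  -- open cover by U_t = {s | q s < q t}
  have hcover : A ⊆ ⋃ t ∈ A, {s | q s < q t} := by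
    intro s hs
    obtain ⟨t, htA, hst⟩ := hcon s hs
    exact Set.mem_biUnion htA hst
  obtain ⟨T, hTA, hTfin, hTcov⟩ := hA.elim_finite_subcover_image
    (fun t _ => hq.isOpen_preimage (q t)) hcover
  have hTne : hTfin.toFinset.Nonempty := by
    rcases hAne with ⟨a, ha⟩
    rcases Set.mem_iUnion₂.1 (hTcov ha) with ⟨t, ht, _⟩
    exact ⟨t, hTfin.mem_toFinset.2 ht⟩
  obtain ⟨u, huT, humax⟩ := hTfin.toFinset.exists_max_image q hTne
  have huA : u ∈ A := hTA (hTfin.mem_toFinset.1 huT)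
  rcases Set.mem_iUnion₂.1 (hTcov huA) with ⟨v, hvT, hv⟩
  exact absurd (humax v (hTfin.mem_toFinset.2 hvT)) (not_le.2 hv)

/-- **Trivial lemma.** If `f < g` on a nonempty compact `A ⊆ B`, all functions upper
semicontinuous into `ℝ ∪ {-∞}`, and `h` is not identically `-∞` on `A`, then
`max_A (f+h) < sup_B (g+h)`. -/
theorem trivial_lemma {D : Type*} [TopologicalSpace D] [T2Space D]
    (f g h : D → EReal)
    (hf : ∀ t, f t ≠ ⊤) (hg : ∀ t, g t ≠ ⊤) (hh : ∀ t, h t ≠ ⊤)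
    (hfu : UpperSemicontinuous f) (hgu : UpperSemicontinuous g)
    (hhu : UpperSemicontinuous h)
    (A B : Set D) (hAne : A.Nonempty) (hAB : A ⊆ B) (hA : IsCompact A)
    (hlt : ∀ t ∈ A, f t < g t)
    (hne : ∃ t ∈ A, h t ≠ ⊥) :
    sSup ((fun t => f t + h t) '' A) < sSup ((fun t => g t + h t) '' B) := by
  have hqu : UpperSemicontinuous fun t => f t + h t :=
    hfu.add' hhu fun x => EReal.continuousAt_add (Or.inl (hf x)) (Or.inr (hh x))
  obtain ⟨t₀, ht₀A, hmax⟩ := usc_exists_max hqu hA hAne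
  have hsup_le : sSup ((fun t => f t + h t) '' A) ≤ f t₀ + h t₀ := by
    apply sSup_le
    rintro x ⟨t, htA, rfl⟩
    exact hmax t htA
  rcases eq_or_ne (f t₀ + h t₀) ⊥ with hbot | hbot
  · -- the max is ⊥; use the point where h ≠ ⊥
    obtain ⟨t₁, ht₁A, ht₁⟩ := hne
    have hg₁ : g t₁ ≠ ⊥ := (bot_le.trans_lt (hlt t₁ ht₁A)).ne'
    have : (⊥ : EReal) < g t₁ + h t₁ :=
      Ne.bot_lt fun hc => by
        rcases EReal.add_eq_bot_iff.1 hc with hc' | hc'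
        · exact hg₁ hc'
        · exact ht₁ hc'
    calc sSup ((fun t => f t + h t) '' A) ≤ ⊥ := hsup_le.trans_eq hbot
      _ < g t₁ + h t₁ := this
      _ ≤ sSup ((fun t => g t + h t) '' B) :=
          le_sSup ⟨t₁, hAB ht₁A, rfl⟩
  · have hh₀ : h t₀ ≠ ⊥ := fun hc => hbot (by simp [hc])
    have hstep : f t₀ + h t₀ < g t₀ + h t₀ :=
      EReal.add_lt_add_of_lt_of_le (hlt t₀ ht₀A) le_rfl hh₀ (hh t₀)
    calc sSup ((fun t => f t + h t) '' A) ≤ f t₀ + h t₀ := hsup_le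
      _ < g t₀ + h t₀ := hstep
      _ ≤ sSup ((fun t => g t + h t) '' B) := le_sSup ⟨t₀, hAB ht₀A, rfl⟩
end
end

section
/- Let $K : [-1,1] \to \mathbb{R}\cup\{-\infty\}$ be a kernel function (finite and concave on $(-1,0)$ and on $(0,1)$, extended by limits to $0, \pm 1$) which is monotone, i.e., non-increasing on $(-1,0)$ and non-decreasing on $(0,1)$. Let $0 < \alpha < a < b < \beta < 1$ and $p, q > 0$, and suppose $\kappa := \frac{p(a-\alpha)}{q(\beta-b)} \ge 1$. Then for every $t \in [0,\alpha]$ one has $pK(t-\alpha) + qK(t-\beta) \le pK(t-a) + qK(t-b)$. -/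
open Set Filter

noncomputable section

/-- Interval perturbation lemma, part (a): for a monotone kernel and `κ ≥ 1`,
the inequality holds on `[0,α]`. -/
theorem interval_perturbation_a (K : ℝ → EReal) (hK : IsMonotoneKernel K)
    (α a b β p q : ℝ)
    (h1 : 0 < α) (h2 : α < a) (h3 : a < b) (h4 : b < β) (h5 : β < 1)
    (hp : 0 < p) (hq : 0 < q)
    (hκ : 1 ≤ p * (a - α) / (q * (β - b))) :
    ∀ t ∈ Set.Icc (0:ℝ) α,
      (p : EReal) * K (t - α) + (q : EReal) * K (t - β)
        ≤ (p : EReal) * K (t - a) + (q : EReal) * K (t - b) := by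
  obtain ⟨⟨hKtop, hKbot, -, hKcc, -, hlim0, -, -, -⟩, hanti, -⟩ := hK
  intro t ht
  obtain ⟨ht0, htα⟩ := ht
  have hx1 : t - β ∈ Set.Ioo (-1:ℝ) 0 := ⟨by linarith, by linarith⟩
  have hx2 : t - b ∈ Set.Ioo (-1:ℝ) 0 := ⟨by linarith, by linarith⟩
  have hx3 : t - a ∈ Set.Ioo (-1:ℝ) 0 := ⟨by linarith, by linarith⟩
  by_cases hbot : K (t - α) = ⊥
  · rw [hbot, EReal.mul_bot_of_pos (by exact_mod_cast hp), EReal.bot_add]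
    exact bot_le
  have hcoe : ∀ s ∈ Set.Ioo (-1:ℝ) 0, K s = (((K s).toReal : ℝ) : EReal) := by
    intro s hs
    exact (EReal.coe_toReal (hKtop s ⟨hs.1.le, hs.2.le.trans one_pos.le⟩) (hKbot s hs)).symm
  have h4top : K (t - α) ≠ ⊤ := hKtop _ ⟨by linarith, by linarith⟩
  have hcoe4 : K (t - α) = (((K (t - α)).toReal : ℝ) : EReal) :=
    (EReal.coe_toReal h4top hbot).symm
  have hmono : ∀ x y, x ∈ Set.Ioo (-1:ℝ) 0 → y ∈ Set.Ioo (-1:ℝ) 0 → x ≤ y →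
      (K y).toReal ≤ (K x).toReal := by
    intro x y hx hy hxy
    have h := hanti hx hy hxy
    rw [hcoe x hx, hcoe y hy, EReal.coe_le_coe_iff] at h
    exact h
  -- fact 1 : f(t-α) ≤ f(t-a)
  have hD : (K (t - α)).toReal ≤ (K (t - a)).toReal := by
    rcases lt_or_eq_of_le htα with h | h
    · exact hmono _ _ hx3 ⟨by linarith, by linarith⟩ (by linarith)
    · have h0 : t - α = 0 := by rw [h]; ring
      rw [h0] at hbot h4top ⊢
      have hev : ∀ᶠ s in nhdsWithin (0:ℝ) (Set.Iio 0), K s ≤ K (t - a) := by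
        filter_upwards [self_mem_nhdsWithin,
          (eventually_gt_nhds (show t - a < 0 by linarith)).filter_mono nhdsWithin_le_nhds]
          with s hs1 hs2
        exact hanti hx3 ⟨lt_trans hx3.1 hs2, hs1⟩ hs2.le
      have hle : K 0 ≤ K (t - a) := le_of_tendsto hlim0 hev
      rw [(EReal.coe_toReal h4top hbot).symm, hcoe _ hx3, EReal.coe_le_coe_iff] at hle
      exact hle
  -- fact 2 : slope chain
  have hS23 : ((K (t-a)).toReal - (K (t-b)).toReal) / ((t-a) - (t-b))
      ≤ ((K (t-b)).toReal - (K (t-β)).toReal) / ((t-b) - (t-β)) :=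
    hKcc.slope_anti_adjacent hx1 hx3 (by linarith) (by linarith)
  have hS34 : ((K (t-α)).toReal - (K (t-a)).toReal) / ((t-α) - (t-a))
      ≤ ((K (t-a)).toReal - (K (t-b)).toReal) / ((t-a) - (t-b)) := by
    rcases lt_or_eq_of_le htα with h | h
    · exact hKcc.slope_anti_adjacent hx2 ⟨by linarith, by linarith⟩ (by linarith) (by linarith)
    · have h0 : t - α = 0 := by rw [h]; ring
      rw [h0] at hbot h4top ⊢
      have htend : Tendsto (fun s => ((K s).toReal - (K (t-a)).toReal) / (s - (t-a)))
          (nhdsWithin (0:ℝ) (Set.Iio 0))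
          (nhds (((K 0).toReal - (K (t-a)).toReal) / (0 - (t-a)))) := by
        apply Tendsto.div
        · exact (((EReal.tendsto_toReal h4top hbot).comp hlim0).sub tendsto_const_nhds)
        · exact ((continuous_id.tendsto 0).mono_left nhdsWithin_le_nhds).sub tendsto_const_nhds
        · linarith
      apply le_of_tendsto htend
      filter_upwards [self_mem_nhdsWithin,
        (eventually_gt_nhds (show t - a < 0 by linarith)).filter_mono nhdsWithin_le_nhds]
        with s hs1 hs2
      exact hKcc.slope_anti_adjacent hx2 ⟨lt_trans hx3.1 hs2, hs1⟩ (by linarith) hs2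
  -- conclude
  have hpq : q * (β - b) ≤ p * (a - α) := by
    have hpos : 0 < q * (β - b) := mul_pos hq (by linarith)
    have := (one_le_div hpos).mp hκ
    linarith
  rw [hcoe _ hx1, hcoe _ hx2, hcoe _ hx3, hcoe4, ← EReal.coe_mul, ← EReal.coe_mul,
    ← EReal.coe_mul, ← EReal.coe_mul, ← EReal.coe_add, ← EReal.coe_add, EReal.coe_le_coe_iff]
  set A := (K (t-β)).toReal
  set B := (K (t-b)).toReal
  set C := (K (t-a)).toReal
  set D := (K (t-α)).toReal
  have hchain : (D - C) / (a - α) ≤ (B - A) / (β - b) := by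
    have e1 : (t-α) - (t-a) = a - α := by ring
    have e2 : (t-a) - (t-b) = b - a := by ring
    have e3 : (t-b) - (t-β) = β - b := by ring
    rw [e1, e2] at hS34; rw [e2, e3] at hS23
    linarith
  have hcross : (D - C) * (β - b) ≤ (B - A) * (a - α) :=
    (div_le_div_iff₀ (by linarith) (by linarith)).mp hchain
  nlinarith [mul_le_mul_of_nonneg_left hcross hq.le,
    mul_le_mul_of_nonneg_left hpq (sub_nonneg.2 hD), mul_pos hq (show (0:ℝ) < β - b by linarith)]
end
end

section
/- Let $K$ be a monotone kernel function, $0 < \alpha < a < b < \beta < 1$, and $p, q > 0$ with $\kappa := \frac{p(a-\alpha)}{q(\beta-b)} \le 1$. Then for every $t \in [\beta, 1]$ one has $pK(t-\alpha) + qK(t-\beta) \le pK(t-a) + qK(t-b)$. -/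
open Set Filter

noncomputable section

section Aux

private lemma slope4 {f : ℝ → ℝ} (hf : ConcaveOn ℝ (Set.Ioo (0:ℝ) 1) f) {u v w z : ℝ}
    (hu : u ∈ Set.Ioo (0:ℝ) 1) (hz : z ∈ Set.Ioo (0:ℝ) 1)
    (h1 : u < v) (h2 : v < w) (h3 : w < z) :
    (f z - f w) / (z - w) ≤ (f v - f u) / (v - u) := by
  have hv : v ∈ Set.Ioo (0:ℝ) 1 := ⟨hu.1.trans h1, (h2.trans h3).trans hz.2⟩
  have hw : w ∈ Set.Ioo (0:ℝ) 1 := ⟨hv.1.trans h2, h3.trans hz.2⟩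
  exact (hf.slope_anti_adjacent hv hz h2 h3).trans (hf.slope_anti_adjacent hu hw h1 h2)

private lemma finreal {p q A B C D aα βb : ℝ} (hp : 0 < p) (hq : 0 < q)
    (hβb : 0 < βb) (hpq : p * aα ≤ q * βb) (hAB : A ≤ B)
    (hk : βb * (D - C) ≤ aα * (B - A)) :
    p * D + q * A ≤ p * C + q * B := by
  nlinarith [mul_le_mul_of_nonneg_left hk hp.le,
    mul_le_mul_of_nonneg_right hpq (sub_nonneg.2 hAB)]

end Aux


/-- Interval perturbation lemma, part (b): for a monotone kernel and `κ ≤ 1`,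
the inequality holds on `[β,1]`. -/
theorem interval_perturbation_b (K : ℝ → EReal) (hK : IsMonotoneKernel K)
    (α a b β p q : ℝ)
    (h1 : 0 < α) (h2 : α < a) (h3 : a < b) (h4 : b < β) (h5 : β < 1)
    (hp : 0 < p) (hq : 0 < q)
    (hκ : p * (a - α) / (q * (β - b)) ≤ 1) :
    ∀ t ∈ Set.Icc β (1:ℝ),
      (p : EReal) * K (t - α) + (q : EReal) * K (t - β)
        ≤ (p : EReal) * K (t - a) + (q : EReal) * K (t - b) := by

  intro t ht
  obtain ⟨⟨hKtop, _, hKbot, _, hconc, _, hlimIoi, _, _⟩, _, hmono⟩ := hK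
  set f : ℝ → ℝ := fun s => (K s).toReal with hf
  have hpq : p * (a - α) ≤ q * (β - b) := by
    rw [div_le_one (by nlinarith)] at hκ; exact hκ
  have hx4 : t - α ∈ Set.Ioo (0:ℝ) 1 := ⟨by linarith [ht.1], by linarith [ht.2]⟩
  have hx3 : t - a ∈ Set.Ioo (0:ℝ) 1 := ⟨by linarith [ht.1], by linarith [ht.2]⟩
  have hx2 : t - b ∈ Set.Ioo (0:ℝ) 1 := ⟨by linarith [ht.1], by linarith [ht.2]⟩
  have fin : ∀ s ∈ Set.Ioo (0:ℝ) 1, K s = ((f s : ℝ) : EReal) := fun s hs =>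
    (EReal.coe_toReal (hKtop s ⟨by linarith [hs.1], hs.2.le⟩) (hKbot s hs)).symm
  rcases eq_or_lt_of_le ht.1 with heq | hlt
  · -- t = β
    have hx1 : t - β = 0 := by rw [← heq]; ring
    by_cases hbot0 : K 0 = ⊥
    · rw [hx1, hbot0, EReal.coe_mul_bot_of_pos hq, EReal.add_bot]
      exact bot_le
    · have h0top : K 0 ≠ ⊤ := hKtop 0 ⟨by norm_num, by norm_num⟩
      set f0 : ℝ := (K 0).toReal with hf0
      have hftend : Tendsto f (nhdsWithin 0 (Set.Ioi 0)) (nhds f0) :=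
        (EReal.tendsto_toReal h0top hbot0).comp hlimIoi
      have hev : ∀ᶠ s in nhdsWithin 0 (Set.Ioi 0),
          (t - b - s) * (f (t - α) - f (t - a)) ≤ (a - α) * (f (t - b) - f s) := by
        filter_upwards [Ioo_mem_nhdsGT hx2.1] with s hs
        have hsIoo : s ∈ Set.Ioo (0:ℝ) 1 := ⟨hs.1, hs.2.trans hx2.2⟩
        have hsl := slope4 hconc (v := t - b) (w := t - a) hsIoo hx4 hs.2 (by linarith) (by linarith)
        have e1 : t - α - (t - a) = a - α := by ring
        rw [e1, div_le_div_iff₀ (by linarith) (by linarith [hs.2])] at hsl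
        nlinarith [hsl]
      have hT1 : Tendsto (fun s : ℝ => (t - b - s) * (f (t - α) - f (t - a)))
          (nhdsWithin 0 (Set.Ioi 0)) (nhds ((t - b) * (f (t - α) - f (t - a)))) := by
        have : Tendsto (fun s : ℝ => (t - b - s) * (f (t - α) - f (t - a)))
            (nhds 0) (nhds ((t - b - 0) * (f (t - α) - f (t - a)))) :=
          ((tendsto_const_nhds.sub tendsto_id).mul tendsto_const_nhds)
        simpa using this.mono_left nhdsWithin_le_nhds
      have hT2 : Tendsto (fun s : ℝ => (a - α) * (f (t - b) - f s))
          (nhdsWithin 0 (Set.Ioi 0)) (nhds ((a - α) * (f (t - b) - f0))) :=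
        (tendsto_const_nhds.sub hftend).const_mul _
      have hk : (t - b) * (f (t - α) - f (t - a)) ≤ (a - α) * (f (t - b) - f0) :=
        le_of_tendsto_of_tendsto hT1 hT2 hev
      have hAB : f0 ≤ f (t - b) := by
        refine le_of_tendsto hftend ?_
        filter_upwards [Ioo_mem_nhdsGT hx2.1] with s hs
        have hsIoo : s ∈ Set.Ioo (0:ℝ) 1 := ⟨hs.1, hs.2.trans hx2.2⟩
        exact EReal.toReal_le_toReal (hmono hsIoo hx2 hs.2.le) (hKbot s hsIoo)
          (hKtop _ ⟨by linarith [hx2.1], hx2.2.le⟩)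
      rw [hx1, fin _ hx4, fin _ hx3, fin _ hx2,
        (EReal.coe_toReal h0top hbot0).symm, ← hf0,
        ← EReal.coe_mul, ← EReal.coe_mul, ← EReal.coe_mul, ← EReal.coe_mul,
        ← EReal.coe_add, ← EReal.coe_add, EReal.coe_le_coe_iff]
      have hβb : t - b = β - b := by rw [← heq]
      exact finreal hp hq (by linarith) hpq hAB (by rw [← hβb]; linarith [hk])
  · -- t > β
    have hx1 : t - β ∈ Set.Ioo (0:ℝ) 1 := ⟨by linarith, by linarith [ht.2]⟩
    have hsl := slope4 hconc (v := t - b) (w := t - a) hx1 hx4 (show t - β < t - b by linarith)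
      (by linarith) (by linarith)
    have e1 : t - α - (t - a) = a - α := by ring
    have e2 : t - b - (t - β) = β - b := by ring
    rw [e1, e2, div_le_div_iff₀ (by linarith) (by linarith)] at hsl
    have hAB : f (t - β) ≤ f (t - b) :=
      EReal.toReal_le_toReal (hmono hx1 hx2 (by linarith)) (hKbot _ hx1)
        (hKtop _ ⟨by linarith [hx2.1], hx2.2.le⟩)
    rw [fin _ hx4, fin _ hx3, fin _ hx2, fin _ hx1,
      ← EReal.coe_mul, ← EReal.coe_mul, ← EReal.coe_mul, ← EReal.coe_mul,
      ← EReal.coe_add, ← EReal.coe_add, EReal.coe_le_coe_iff]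
    exact finreal hp hq (by linarith) hpq hAB (by nlinarith [hsl])
end
end

section
/- Let $K$ be a kernel function (not necessarily monotone), $0 < \alpha < a < b < \beta < 1$, and $p,q > 0$ with $p(a-\alpha) = q(\beta-b)$. Then for every $t \in [0,\alpha] \cup [\beta,1]$ one has $pK(t-\alpha) + qK(t-\beta) \le pK(t-a) + qK(t-b)$. -/
open Set Filter

noncomputable section

lemma concave_four {S : Set ℝ} {f : ℝ → ℝ} (hf : ConcaveOn ℝ S f)
    {x₂ x₂' x₁' x₁ p q : ℝ} (hx₂ : x₂ ∈ S) (hx₁ : x₁ ∈ S)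
    (h21 : x₂ ≤ x₂') (h22 : x₂' ≤ x₁') (h23 : x₁' ≤ x₁)
    (hp : 0 < p) (hq : 0 < q)
    (hbar : p * x₁ + q * x₂ = p * x₁' + q * x₂') :
    p * f x₁ + q * f x₂ ≤ p * f x₁' + q * f x₂' := by
  rcases eq_or_lt_of_le (le_trans h21 (le_trans h22 h23) : x₂ ≤ x₁) with heq | hlt
  · have e1 : x₂' = x₂ := by linarith
    have e2 : x₁' = x₂ := by linarith
    have e3 : x₁ = x₂ := heq.symm
    rw [e1, e2, e3]
  · have hd : (0:ℝ) < x₁ - x₂ := by linarith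
    set l := (x₁' - x₂) / (x₁ - x₂) with hl
    set m := (x₂' - x₂) / (x₁ - x₂) with hm
    have hl0 : 0 ≤ l := div_nonneg (by linarith) hd.le
    have hl1 : l ≤ 1 := by rw [hl, div_le_one hd]; linarith
    have hm0 : 0 ≤ m := div_nonneg (by linarith) hd.le
    have hm1 : m ≤ 1 := by rw [hm, div_le_one hd]; linarith
    have e1 : l • x₁ + (1 - l) • x₂ = x₁' := by
      field_simp [hl, smul_eq_mul]
      have hh := div_mul_cancel₀ (x₁' - x₂) hd.ne'
      rw [← hl] at hh
      linear_combination hh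
    have e2 : m • x₁ + (1 - m) • x₂ = x₂' := by
      field_simp [hm, smul_eq_mul]
      have hh := div_mul_cancel₀ (x₂' - x₂) hd.ne'
      rw [← hm] at hh
      linear_combination hh
    have h1 : l * f x₁ + (1 - l) * f x₂ ≤ f x₁' := by
      have := hf.2 hx₁ hx₂ hl0 (sub_nonneg.2 hl1) (add_sub_cancel l 1)
      rw [e1] at this
      simpa [smul_eq_mul] using this
    have h2 : m * f x₁ + (1 - m) * f x₂ ≤ f x₂' := by
      have := hf.2 hx₁ hx₂ hm0 (sub_nonneg.2 hm1) (add_sub_cancel m 1)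
      rw [e2] at this
      simpa [smul_eq_mul] using this
    have key : p * l + q * m = p := by
      rw [hl, hm]
      field_simp
      linarith
    have k1 : (p * l + q * m) * f x₁ = p * f x₁ := by rw [key]
    have k2 : (p * (1 - l) + q * (1 - m)) * f x₂ = q * f x₂ := by
      rw [show p * (1 - l) + q * (1 - m) = q by linarith]
    linarith [mul_le_mul_of_nonneg_left h1 hp.le, mul_le_mul_of_nonneg_left h2 hq.le, k1, k2]

lemma ereal_step {K : ℝ → EReal} {x₂ x₂' x₁' x₁ : ℝ} {p q : ℝ}
    (h1t : K x₁ ≠ ⊤) (h1b : K x₁ ≠ ⊥) (h2t : K x₂ ≠ ⊤) (h2b : K x₂ ≠ ⊥)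
    (h3t : K x₁' ≠ ⊤) (h3b : K x₁' ≠ ⊥) (h4t : K x₂' ≠ ⊤) (h4b : K x₂' ≠ ⊥)
    (h : p * (K x₁).toReal + q * (K x₂).toReal
        ≤ p * (K x₁').toReal + q * (K x₂').toReal) :
    (p : EReal) * K x₁ + (q : EReal) * K x₂
      ≤ (p : EReal) * K x₁' + (q : EReal) * K x₂' := by
  rw [← EReal.coe_toReal h1t h1b, ← EReal.coe_toReal h2t h2b, ← EReal.coe_toReal h3t h3b,
      ← EReal.coe_toReal h4t h4b, ← EReal.coe_mul, ← EReal.coe_mul, ← EReal.coe_mul,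
      ← EReal.coe_mul, ← EReal.coe_add, ← EReal.coe_add]
  exact_mod_cast h

/-- Interval perturbation lemma, part (c): for any kernel (not necessarily monotone)
and `κ = 1`, the inequality holds on `[0,α] ∪ [β,1]`. -/
theorem interval_perturbation_c (K : ℝ → EReal) (hK : IsKernelFunction K)
    (α a b β p q : ℝ)
    (h1 : 0 < α) (h2 : α < a) (h3 : a < b) (h4 : b < β) (h5 : β < 1)
    (hp : 0 < p) (hq : 0 < q)
    (hκ : p * (a - α) = q * (β - b)) :
    ∀ t ∈ Set.Icc (0:ℝ) α ∪ Set.Icc β (1:ℝ),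
      (p : EReal) * K (t - α) + (q : EReal) * K (t - β)
        ≤ (p : EReal) * K (t - a) + (q : EReal) * K (t - b) := by
  obtain ⟨hTop, hBot1, hBot2, hCon1, hCon2, hL0, hR0, -, -⟩ := hK
  set f : ℝ → ℝ := fun s => (K s).toReal with hfdef
  have fin1 : ∀ x ∈ Set.Ioo (-1:ℝ) 0, K x ≠ ⊤ ∧ K x ≠ ⊥ := fun x hx =>
    ⟨hTop x ⟨hx.1.le, hx.2.le.trans (by norm_num)⟩, hBot1 x hx⟩
  have fin2 : ∀ x ∈ Set.Ioo (0:ℝ) 1, K x ≠ ⊤ ∧ K x ≠ ⊥ := fun x hx =>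
    ⟨hTop x ⟨le_trans (by norm_num) hx.1.le, hx.2.le⟩, hBot2 x hx⟩
  have hT0 : K 0 ≠ ⊤ := hTop 0 ⟨by norm_num, by norm_num⟩
  rintro t (⟨ht0, htα⟩ | ⟨htβ, ht1⟩)
  · -- t ∈ [0, α]
    rcases lt_or_eq_of_le htα with hlt | heq
    · -- generic case, all four points inside (-1,0)
      have m1 : t - β ∈ Set.Ioo (-1:ℝ) 0 := ⟨by linarith, by linarith⟩
      have m2 : t - b ∈ Set.Ioo (-1:ℝ) 0 := ⟨by linarith, by linarith⟩
      have m3 : t - a ∈ Set.Ioo (-1:ℝ) 0 := ⟨by linarith, by linarith⟩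
      have m4 : t - α ∈ Set.Ioo (-1:ℝ) 0 := ⟨by linarith, by linarith⟩
      have hreal := concave_four (x₂' := t - b) (x₁' := t - a) hCon1 m1 m4
        (by linarith) (by linarith) (by linarith) hp hq (by linarith)
      exact ereal_step (fin1 _ m4).1 (fin1 _ m4).2 (fin1 _ m1).1 (fin1 _ m1).2
        (fin1 _ m3).1 (fin1 _ m3).2 (fin1 _ m2).1 (fin1 _ m2).2 hreal
    · -- t = α : left endpoint case, limit from the left at 0
      rw [heq]
      by_cases hb : K 0 = ⊥
      · rw [sub_self, hb, EReal.coe_mul_bot_of_pos hp, EReal.bot_add]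
        exact bot_le
      · set c : ℝ := p / q with hcdef
        have hc : 0 < c := div_pos hp hq
        have hqc : q * c = p := by rw [hcdef, mul_comm]; exact div_mul_cancel₀ p hq.ne'
        have m1 : α - β ∈ Set.Ioo (-1:ℝ) 0 := ⟨by linarith, by linarith⟩
        have m2 : α - b ∈ Set.Ioo (-1:ℝ) 0 := ⟨by linarith, by linarith⟩
        have m3 : α - a ∈ Set.Ioo (-1:ℝ) 0 := ⟨by linarith, by linarith⟩
        have ev : ∀ᶠ u in nhdsWithin (0:ℝ) (Set.Iio 0),
            p * f u + q * f (α - β - c * u) ≤ p * f (α - a) + q * f (α - b) := by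
          filter_upwards [Ioo_mem_nhdsLT (show α - a < (0:ℝ) by linarith)]
            with u hu
          obtain ⟨hu1, hu2⟩ := hu
          have hcu1 : c * (α - a) < c * u := mul_lt_mul_of_pos_left hu1 hc
          have hca : c * (α - a) = b - β := by
            rw [hcdef]; field_simp; linarith
          have hcu2 : c * u < 0 := mul_neg_of_pos_of_neg hc hu2
          have hmu : u ∈ Set.Ioo (-1:ℝ) 0 := ⟨by linarith, hu2⟩
          have hmx : α - β - c * u ∈ Set.Ioo (-1:ℝ) 0 := ⟨by linarith, by linarith⟩
          have hqcu : q * (c * u) = p * u := by rw [← mul_assoc, hqc]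
          exact concave_four hCon1 hmx hmu (by linarith) (by linarith) (by linarith)
            hp hq (by linear_combination hκ - hqcu)
        have tf : Tendsto f (nhdsWithin (0:ℝ) (Set.Iio 0)) (nhds ((K 0).toReal)) :=
          (EReal.tendsto_toReal hT0 hb).comp hL0
        have tinner : Tendsto (fun u : ℝ => α - β - c * u) (nhdsWithin (0:ℝ) (Set.Iio 0))
            (nhds (α - β)) := by
          have hcont : Continuous (fun u : ℝ => α - β - c * u) :=
            continuous_const.sub (continuous_const.mul continuous_id)
          have h := (hcont.tendsto 0).mono_left (nhdsWithin_le_nhds (s := Set.Iio 0))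
          simpa using h
        have cf : ContinuousAt f (α - β) :=
          (hCon1.continuousOn isOpen_Ioo).continuousAt (isOpen_Ioo.mem_nhds m1)
        have t2 : Tendsto (fun u : ℝ => f (α - β - c * u)) (nhdsWithin (0:ℝ) (Set.Iio 0))
            (nhds (f (α - β))) := cf.tendsto.comp tinner
        have tall : Tendsto (fun u : ℝ => p * f u + q * f (α - β - c * u))
            (nhdsWithin (0:ℝ) (Set.Iio 0))
            (nhds (p * (K 0).toReal + q * f (α - β))) :=
          ((tf.const_mul p).add (t2.const_mul q))
        have hreal : p * (K 0).toReal + q * f (α - β) ≤ p * f (α - a) + q * f (α - b) :=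
          le_of_tendsto tall ev
        rw [sub_self]
        exact ereal_step hT0 hb (fin1 _ m1).1 (fin1 _ m1).2
          (fin1 _ m3).1 (fin1 _ m3).2 (fin1 _ m2).1 (fin1 _ m2).2 hreal
  · -- t ∈ [β, 1]
    rcases lt_or_eq_of_le htβ with hlt | heq
    · have m1 : t - β ∈ Set.Ioo (0:ℝ) 1 := ⟨by linarith, by linarith⟩
      have m2 : t - b ∈ Set.Ioo (0:ℝ) 1 := ⟨by linarith, by linarith⟩
      have m3 : t - a ∈ Set.Ioo (0:ℝ) 1 := ⟨by linarith, by linarith⟩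
      have m4 : t - α ∈ Set.Ioo (0:ℝ) 1 := ⟨by linarith, by linarith⟩
      have hreal := concave_four (x₂' := t - b) (x₁' := t - a) hCon2 m1 m4
        (by linarith) (by linarith) (by linarith) hp hq (by linarith)
      exact ereal_step (fin2 _ m4).1 (fin2 _ m4).2 (fin2 _ m1).1 (fin2 _ m1).2
        (fin2 _ m3).1 (fin2 _ m3).2 (fin2 _ m2).1 (fin2 _ m2).2 hreal
    · -- t = β : right endpoint case, limit from the right at 0
      rw [← heq]
      by_cases hb : K 0 = ⊥
      · rw [sub_self, hb, EReal.coe_mul_bot_of_pos hq, EReal.add_bot]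
        exact bot_le
      · set c : ℝ := q / p with hcdef
        have hc : 0 < c := div_pos hq hp
        have hpc : p * c = q := by rw [hcdef, mul_comm]; exact div_mul_cancel₀ q hp.ne'
        have m1 : β - α ∈ Set.Ioo (0:ℝ) 1 := ⟨by linarith, by linarith⟩
        have m2 : β - b ∈ Set.Ioo (0:ℝ) 1 := ⟨by linarith, by linarith⟩
        have m3 : β - a ∈ Set.Ioo (0:ℝ) 1 := ⟨by linarith, by linarith⟩
        have ev : ∀ᶠ u in nhdsWithin (0:ℝ) (Set.Ioi 0),
            p * f (β - α - c * u) + q * f u ≤ p * f (β - a) + q * f (β - b) := by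
          filter_upwards [Ioo_mem_nhdsGT (show (0:ℝ) < β - b by linarith)]
            with u hu
          obtain ⟨hu1, hu2⟩ := hu
          have hcu1 : c * u < c * (β - b) := mul_lt_mul_of_pos_left hu2 hc
          have hcb : c * (β - b) = a - α := by
            rw [hcdef]; field_simp; linarith
          have hcu2 : 0 < c * u := mul_pos hc hu1
          have hmu : u ∈ Set.Ioo (0:ℝ) 1 := ⟨hu1, by linarith⟩
          have hmx : β - α - c * u ∈ Set.Ioo (0:ℝ) 1 := ⟨by linarith, by linarith⟩
          have hpcu : p * (c * u) = q * u := by rw [← mul_assoc, hpc]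
          exact concave_four hCon2 hmu hmx (by linarith) (by linarith) (by linarith)
            hp hq (by linear_combination hκ - hpcu)
        have tf : Tendsto f (nhdsWithin (0:ℝ) (Set.Ioi 0)) (nhds ((K 0).toReal)) :=
          (EReal.tendsto_toReal hT0 hb).comp hR0
        have tinner : Tendsto (fun u : ℝ => β - α - c * u) (nhdsWithin (0:ℝ) (Set.Ioi 0))
            (nhds (β - α)) := by
          have hcont : Continuous (fun u : ℝ => β - α - c * u) :=
            continuous_const.sub (continuous_const.mul continuous_id)
          have h := (hcont.tendsto 0).mono_left (nhdsWithin_le_nhds (s := Set.Ioi 0))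
          simpa using h
        have cf : ContinuousAt f (β - α) :=
          (hCon2.continuousOn isOpen_Ioo).continuousAt (isOpen_Ioo.mem_nhds m1)
        have t2 : Tendsto (fun u : ℝ => f (β - α - c * u)) (nhdsWithin (0:ℝ) (Set.Ioi 0))
            (nhds (f (β - α))) := cf.tendsto.comp tinner
        have tall : Tendsto (fun u : ℝ => p * f (β - α - c * u) + q * f u)
            (nhdsWithin (0:ℝ) (Set.Ioi 0))
            (nhds (p * f (β - α) + q * (K 0).toReal)) :=
          ((t2.const_mul p).add (tf.const_mul q))
        have hreal : p * f (β - α) + q * (K 0).toReal ≤ p * f (β - a) + q * f (β - b) :=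
          le_of_tendsto tall ev
        rw [sub_self]
        exact ereal_step (fin2 _ m1).1 (fin2 _ m1).2 hT0 hb
          (fin2 _ m3).1 (fin2 _ m3).2 (fin2 _ m2).1 (fin2 _ m2).2 hreal
end
end

section
/- Let $K$ be a kernel function, $n \in \mathbb{N}$, $\nu_1,\dots,\nu_n > 0$, and $J$ an $n$-field function. Define $F(\mathbf{y},t) = J(t) + \sum_{j=1}^n \nu_j K(t - y_j)$ and $\overline{m}(\mathbf{y}) = \sup_{t\in[0,1]} F(\mathbf{y},t)$ for $\mathbf{y} \in \overline{S}$. Then $\overline{m} : \overline{S} \to \mathbb{R}$ is real-valued and continuous. -/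
open Set Filter

noncomputable section

section Helpers

open EReal

variable {K : ℝ → EReal}

/-- Singular points of the kernel. -/
def KSing (K : ℝ → EReal) (z : ℝ) : Prop := (z = -1 ∨ z = 0 ∨ z = 1) ∧ K z = ⊥

lemma kernel_bot_sing (hK : IsKernelFunction K) {s : ℝ} (hs : s ∈ Set.Icc (-1:ℝ) 1)
    (h : K s = ⊥) : KSing K s := by
  obtain ⟨-, hb1, hb2, -⟩ := hK
  refine ⟨?_, h⟩
  by_contra hc
  push_neg at hc
  obtain ⟨h1, h0, h2⟩ := hc
  rcases lt_or_gt_of_ne h0 with h' | h'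
  · exact hb1 s ⟨lt_of_le_of_ne hs.1 (Ne.symm h1), h'⟩ h
  · exact hb2 s ⟨h', lt_of_le_of_ne hs.2 h2⟩ h

lemma kernel_continuousOn (hK : IsKernelFunction K) :
    ContinuousOn K (Set.Icc (-1:ℝ) 1) := by
  obtain ⟨htop, hbot1, hbot2, hcon1, hcon2, hl0, hr0, hm1, hp1⟩ := hK
  have sub1 : Set.Ioo (-1:ℝ) 0 ⊆ Set.Icc (-1:ℝ) 1 := fun u hu =>
    ⟨hu.1.le, by linarith [hu.2]⟩
  have sub2 : Set.Ioo (0:ℝ) 1 ⊆ Set.Icc (-1:ℝ) 1 := fun u hu =>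
    ⟨by linarith [hu.1], hu.2.le⟩
  have c1 : ContinuousOn K (Set.Ioo (-1:ℝ) 0) := by
    have h1 := hcon1.continuousOn isOpen_Ioo
    intro x hx
    have h2 : ContinuousWithinAt (fun t => (((K t).toReal : ℝ) : EReal))
        (Set.Ioo (-1:ℝ) 0) x :=
      continuous_coe_real_ereal.continuousAt.comp_continuousWithinAt (h1 x hx)
    refine h2.congr (fun t ht => ?_) ?_
    · exact (EReal.coe_toReal (htop t (sub1 ht)) (hbot1 t ht)).symm
    · exact (EReal.coe_toReal (htop x (sub1 hx)) (hbot1 x hx)).symm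
  have c2 : ContinuousOn K (Set.Ioo (0:ℝ) 1) := by
    have h1 := hcon2.continuousOn isOpen_Ioo
    intro x hx
    have h2 : ContinuousWithinAt (fun t => (((K t).toReal : ℝ) : EReal))
        (Set.Ioo (0:ℝ) 1) x :=
      continuous_coe_real_ereal.continuousAt.comp_continuousWithinAt (h1 x hx)
    refine h2.congr (fun t ht => ?_) ?_
    · exact (EReal.coe_toReal (htop t (sub2 ht)) (hbot2 t ht)).symm
    · exact (EReal.coe_toReal (htop x (sub2 hx)) (hbot2 x hx)).symm
  intro x hx
  rcases eq_or_lt_of_le hx.1 with h1 | h1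
  · -- x = -1
    subst h1
    refine Filter.Tendsto.mono_left ?_ (nhdsWithin_mono _ (?_ : Set.Icc (-1:ℝ) 1 ⊆ Set.Ioi (-1:ℝ) ∪ {(-1:ℝ)}))
    · rw [nhdsWithin_union, nhdsWithin_singleton]
      exact Filter.Tendsto.sup hm1 (tendsto_pure_nhds K (-1))
    · intro u hu
      rcases eq_or_lt_of_le hu.1 with h | h
      · exact Or.inr (by simp [← h])
      · exact Or.inl h
  rcases eq_or_lt_of_le hx.2 with h2 | h2
  · -- x = 1
    subst h2
    refine Filter.Tendsto.mono_left ?_ (nhdsWithin_mono _ (?_ : Set.Icc (-1:ℝ) 1 ⊆ Set.Iio (1:ℝ) ∪ {(1:ℝ)}))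
    · rw [nhdsWithin_union, nhdsWithin_singleton]
      exact Filter.Tendsto.sup hp1 (tendsto_pure_nhds K 1)
    · intro u hu
      rcases eq_or_lt_of_le hu.2 with h | h
      · exact Or.inr (by simp [h])
      · exact Or.inl h
  rcases lt_trichotomy x 0 with h0 | h0 | h0
  · exact ((c1 x ⟨h1, h0⟩).mono (fun u hu => hu)).continuousAt
      (Ioo_mem_nhds h1 h0) |>.continuousWithinAt
  · -- x = 0
    subst h0
    refine Filter.Tendsto.mono_left ?_ (nhdsWithin_mono _
      (?_ : Set.Icc (-1:ℝ) 1 ⊆ (Set.Iio (0:ℝ) ∪ Set.Ioi (0:ℝ)) ∪ {(0:ℝ)}))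
    · rw [nhdsWithin_union, nhdsWithin_union, nhdsWithin_singleton]
      exact Filter.Tendsto.sup (Filter.Tendsto.sup hl0 hr0) (tendsto_pure_nhds K 0)
    · intro u _
      rcases lt_trichotomy u 0 with h | h | h
      · exact Or.inl (Or.inl h)
      · exact Or.inr (by simp [h])
      · exact Or.inl (Or.inr h)
  · exact ((c2 x ⟨h0, h2⟩).mono (fun u hu => hu)).continuousAt
      (Ioo_mem_nhds h0 h2) |>.continuousWithinAt

lemma kernel_bddAbove (hK : IsKernelFunction K) :
    ∃ B : ℝ, 0 ≤ B ∧ ∀ s ∈ Set.Icc (-1:ℝ) 1, K s ≤ (B : EReal) := by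
  obtain ⟨x, hx, hmax⟩ := isCompact_Icc.exists_isMaxOn
    (Set.nonempty_Icc.2 (by norm_num : (-1:ℝ) ≤ 1)) (kernel_continuousOn hK)
  refine ⟨max (K x).toReal 0, le_max_right _ _, fun s hs => ?_⟩
  refine le_trans (hmax hs) (le_trans (EReal.le_coe_toReal (hK.1 x hx)) ?_)
  exact_mod_cast le_max_left (K x).toReal 0

lemma small_of_tendsto {z : ℝ} {S : Set ℝ} (h : Filter.Tendsto K (nhdsWithin z S) (nhds ⊥))
    (M : ℝ) : ∃ η > 0, ∀ s ∈ S, |s - z| < η → K s ≤ ((-M : ℝ) : EReal) := by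
  have hev : ∀ᶠ s in nhdsWithin z S, K s < ((-M : ℝ) : EReal) :=
    h.eventually_lt_const (EReal.bot_lt_coe (-M))
  obtain ⟨η, hη, hs⟩ := Metric.mem_nhdsWithin_iff.1 hev
  refine ⟨η, hη, fun s hsS hlt => ?_⟩
  exact (hs ⟨by rwa [Metric.mem_ball, Real.dist_eq], hsS⟩).le

lemma kernel_small (hK : IsKernelFunction K) {z : ℝ} (hz : KSing K z) (M : ℝ) :
    ∃ η > 0, ∀ s ∈ Set.Icc (-1:ℝ) 1, |s - z| < η → K s ≤ ((-M : ℝ) : EReal) := by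
  obtain ⟨hzm, hzbot⟩ := hz
  obtain ⟨htop, hbot1, hbot2, hcon1, hcon2, hl0, hr0, hm1, hp1⟩ := hK
  rcases hzm with rfl | rfl | rfl
  · rw [hzbot] at hm1
    obtain ⟨η, hη, hs⟩ := small_of_tendsto hm1 M
    refine ⟨η, hη, fun s hsI hlt => ?_⟩
    rcases eq_or_lt_of_le hsI.1 with h | h
    · rw [← h, hzbot]; exact bot_le
    · exact hs s h hlt
  · rw [hzbot] at hl0 hr0
    obtain ⟨η1, hη1, hs1⟩ := small_of_tendsto hl0 M
    obtain ⟨η2, hη2, hs2⟩ := small_of_tendsto hr0 M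
    refine ⟨min η1 η2, lt_min hη1 hη2, fun s _ hlt => ?_⟩
    rcases lt_trichotomy s 0 with h | h | h
    · exact hs1 s h (lt_of_lt_of_le hlt (min_le_left _ _))
    · rw [h, hzbot]; exact bot_le
    · exact hs2 s h (lt_of_lt_of_le hlt (min_le_right _ _))
  · rw [hzbot] at hp1
    obtain ⟨η, hη, hs⟩ := small_of_tendsto hp1 M
    refine ⟨η, hη, fun s hsI hlt => ?_⟩
    rcases eq_or_lt_of_le hsI.2 with h | h
    · rw [h, hzbot]; exact bot_le
    · exact hs s h hlt

lemma kernel_small_all (hK : IsKernelFunction K) (M : ℝ) :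
    ∃ η > 0, ∀ s ∈ Set.Icc (-1:ℝ) 1, ∀ z, KSing K z → |s - z| < η →
      K s ≤ ((-M : ℝ) : EReal) := by
  have h : ∀ z : ℝ, ∃ η > 0, KSing K z →
      ∀ s ∈ Set.Icc (-1:ℝ) 1, |s - z| < η → K s ≤ ((-M : ℝ) : EReal) := by
    intro z
    by_cases hz : KSing K z
    · obtain ⟨η, hη, hs⟩ := kernel_small hK hz M
      exact ⟨η, hη, fun _ => hs⟩
    · exact ⟨1, one_pos, fun h => absurd h hz⟩
  obtain ⟨η1, hη1, hs1⟩ := h (-1)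
  obtain ⟨η2, hη2, hs2⟩ := h 0
  obtain ⟨η3, hη3, hs3⟩ := h 1
  refine ⟨min η1 (min η2 η3), by positivity, fun s hs z hz hlt => ?_⟩
  rcases hz.1 with rfl | rfl | rfl
  · exact hs1 hz s hs (lt_of_lt_of_le hlt (min_le_left _ _))
  · exact hs2 hz s hs (lt_of_lt_of_le hlt ((min_le_right _ _).trans (min_le_left _ _)))
  · exact hs3 hz s hs (lt_of_lt_of_le hlt ((min_le_right _ _).trans (min_le_right _ _)))

lemma kernel_unif (hK : IsKernelFunction K) {ε η : ℝ} (hε : 0 < ε) (hη : 0 < η) :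
    ∃ δ > 0, δ ≤ η / 2 ∧ ∀ s ∈ Set.Icc (-1:ℝ) 1, ∀ s' ∈ Set.Icc (-1:ℝ) 1,
      (∀ z, KSing K z → η ≤ |s - z|) → |s - s'| < δ →
      K s' ≠ ⊥ ∧ K s' ≠ ⊤ ∧ K s ≤ (((K s').toReal + ε : ℝ) : EReal) := by
  classical
  set A : Set ℝ := {u ∈ Set.Icc (-1:ℝ) 1 | ∀ z, KSing K z → η / 2 ≤ |u - z|} with hA
  have hsub : A ⊆ Set.Icc (-1:ℝ) 1 := fun u hu => hu.1
  have hAclosed : IsClosed A := by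
    have : A = Set.Icc (-1:ℝ) 1 ∩ ⋂ (z : ℝ) (_ : KSing K z), {u | η / 2 ≤ |u - z|} := by
      ext u
      simp only [hA, Set.mem_setOf_eq, Set.mem_sep_iff, Set.mem_inter_iff, Set.mem_iInter]
    rw [this]
    refine isClosed_Icc.inter (isClosed_iInter fun z => isClosed_iInter fun _ => ?_)
    exact isClosed_le continuous_const (continuous_abs.comp (continuous_id.sub continuous_const))
  have hAcomp : IsCompact A := isCompact_Icc.of_isClosed_subset hAclosed hsub
  have hAbot : ∀ u ∈ A, K u ≠ ⊥ := by
    intro u hu hbot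
    have := hu.2 u (kernel_bot_sing hK (hu.1) hbot)
    simp at this
    linarith
  have hAtop : ∀ u ∈ A, K u ≠ ⊤ := fun u hu => hK.1 u (hsub hu)
  have hf : ContinuousOn (fun u => (K u).toReal) A := by
    intro u hu
    exact (EReal.tendsto_toReal (hAtop u hu) (hAbot u hu)).comp
      (((kernel_continuousOn hK).mono hsub) u hu)
  have huc := hAcomp.uniformContinuousOn_of_continuous hf
  rw [Metric.uniformContinuousOn_iff] at huc
  obtain ⟨δ0, hδ0, hucd⟩ := huc ε hε
  refine ⟨min δ0 (η / 2), lt_min hδ0 (by linarith), min_le_right _ _, ?_⟩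
  intro s hsI s' hsI' hgood hlt
  have hsA : s ∈ A := ⟨hsI, fun z hz => le_trans (by linarith) (hgood z hz)⟩
  have hs'A : s' ∈ A := by
    refine ⟨hsI', fun z hz => ?_⟩
    have h1 := hgood z hz
    have h2 : |s - s'| < η / 2 := lt_of_lt_of_le hlt (min_le_right _ _)
    have : |s - z| - |s - s'| ≤ |s' - z| := by
      have := abs_sub_abs_le_abs_sub (s - z) (s - s')
      have h3 : (s - z) - (s - s') = s' - z := by ring
      rwa [h3] at this
    linarith
  refine ⟨hAbot s' hs'A, hAtop s' hs'A, ?_⟩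
  have hd := hucd s hsA s' hs'A (by rw [Real.dist_eq]; exact lt_of_lt_of_le hlt (min_le_left _ _))
  rw [Real.dist_eq, abs_sub_lt_iff] at hd
  have : (K s).toReal ≤ (K s').toReal + ε := by linarith [hd.1]
  calc K s = (((K s).toReal : ℝ) : EReal) :=
        (EReal.coe_toReal (hAtop s hsA) (hAbot s hsA)).symm
    _ ≤ (((K s').toReal + ε : ℝ) : EReal) := EReal.coe_le_coe_iff.2 this

end Helpers


section Helpers2

open EReal

lemma ereal_coe_sum {ι : Type*} (s : Finset ι) (f : ι → ℝ) :
    ((∑ i ∈ s, f i : ℝ) : EReal) = ∑ i ∈ s, ((f i : ℝ) : EReal) := by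
  classical
  induction s using Finset.induction_on with
  | empty => simp
  | @insert a s' ha ih => rw [Finset.sum_insert ha, Finset.sum_insert ha, ← ih, EReal.coe_add]

lemma ereal_sum_ne_top {ι : Type*} (s : Finset ι) (f : ι → EReal)
    (h : ∀ i ∈ s, f i ≠ ⊤) : ∑ i ∈ s, f i ≠ ⊤ := by
  classical
  induction s using Finset.induction_on with
  | empty => simp
  | @insert a s' ha ih =>
      rw [Finset.sum_insert ha]
      exact (EReal.add_lt_top (h a (Finset.mem_insert_self a s'))
        (ih (fun i hi => h i (Finset.mem_insert_of_mem hi)))).ne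

lemma ereal_pos_mul_ne_top {c : ℝ} (hc : 0 < c) {x : EReal} (hx : x ≠ ⊤) :
    (c : EReal) * x ≠ ⊤ := by
  induction x with
  | bot => rw [EReal.coe_mul_bot_of_pos hc]; exact bot_ne_top
  | coe y => rw [← EReal.coe_mul]; exact EReal.coe_ne_top _
  | top => exact absurd rfl hx

lemma ereal_cwa_add {α : Type*} [TopologicalSpace α] {f g : α → EReal} {s : Set α} {x : α}
    (hf : ContinuousWithinAt f s x) (hg : ContinuousWithinAt g s x)
    (hf' : f x ≠ ⊤) (hg' : g x ≠ ⊤) :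
    ContinuousWithinAt (fun y => f y + g y) s x := by
  have h : ContinuousAt (fun p : EReal × EReal => p.1 + p.2) (f x, g x) :=
    EReal.continuousAt_add (Or.inl hf') (Or.inr hg')
  exact Filter.Tendsto.comp h (hf.prodMk hg)

lemma ereal_cwa_sum {α ι : Type*} [TopologicalSpace α] (s : Finset ι) {f : ι → α → EReal}
    {S : Set α} {x : α} (h : ∀ i ∈ s, ContinuousWithinAt (f i) S x)
    (h' : ∀ i ∈ s, f i x ≠ ⊤) :
    ContinuousWithinAt (fun y => ∑ i ∈ s, f i y) S x := by
  classical
  induction s using Finset.induction_on with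
  | empty => simpa using continuousWithinAt_const
  | @insert a s' ha ih =>
      have h1 := ereal_cwa_add (h a (Finset.mem_insert_self a s'))
        (ih (fun i hi => h i (Finset.mem_insert_of_mem hi))
            (fun i hi => h' i (Finset.mem_insert_of_mem hi)))
        (h' a (Finset.mem_insert_self a s'))
        (ereal_sum_ne_top s' _ (fun i hi => h' i (Finset.mem_insert_of_mem hi)))
      have h2 : (fun y => ∑ i ∈ insert a s', f i y)
          = fun y => f a y + ∑ i ∈ s', f i y := by
        funext y
        rw [Finset.sum_insert ha]
      rw [h2]
      exact h1

lemma ereal_continuous_const_mul {c : ℝ} (hc : c ≠ 0) :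
    Continuous (fun x : EReal => (c : EReal) * x) := by
  rw [continuous_iff_continuousAt]
  intro x
  have h : ContinuousAt (fun p : EReal × EReal => p.1 * p.2) ((c : EReal), x) :=
    EReal.continuousAt_mul (Or.inl (by simpa using hc)) (Or.inl (by simpa using hc))
      (Or.inl (EReal.coe_ne_bot c)) (Or.inl (EReal.coe_ne_top c))
  exact h.comp (Continuous.continuousAt (continuous_const.prodMk continuous_id))

variable {K : ℝ → EReal}

lemma exists_good_t (hK : IsKernelFunction K) {n : ℕ} {y : Fin n → ℝ}
    (hy : y ∈ simplex n) {T : Finset ℝ} (hT : ↑T ⊆ Set.Icc (0:ℝ) 1)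
    (hTc : (n : ℝ) < ∑ t ∈ T, (if t = 0 ∨ t = 1 then (1/2 : ℝ) else 1)) :
    ∃ t ∈ T, ∀ j, K (t - y j) ≠ ⊥ := by
  classical
  set w : ℝ → ℝ := fun t => if t = 0 ∨ t = 1 then (1/2 : ℝ) else 1 with hw
  have hw0 : ∀ t, 0 ≤ w t := by
    intro t
    by_cases h : t = 0 ∨ t = 1 <;> simp [hw, h] <;> norm_num
  have hw1 : ∀ t, w t ≤ 1 := by
    intro t
    by_cases h : t = 0 ∨ t = 1 <;> simp [hw, h] <;> norm_num
  set N : Finset ℝ := Finset.univ.image y with hN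
  have hNcard : (N.card : ℝ) ≤ (n : ℝ) := by
    have h1 : N.card ≤ (Finset.univ : Finset (Fin n)).card := Finset.card_image_le
    rw [Finset.card_univ, Fintype.card_fin] at h1
    exact_mod_cast h1
  have hsum_le : ∀ S : Finset ℝ, ∑ t ∈ S, w t ≤ (S.card : ℝ) := by
    intro S
    calc ∑ t ∈ S, w t ≤ ∑ _t ∈ S, (1:ℝ) := Finset.sum_le_sum (fun i _ => hw1 i)
      _ = (S.card : ℝ) := by simp
  have key : ∀ (S : Finset ℝ) (a : ℝ), a ∈ S → w a = 1/2 →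
      ∑ t ∈ S, w t ≤ (S.card : ℝ) - 1/2 := by
    intro S a ha hwa
    have h1 : ∑ t ∈ S, w t = w a + ∑ t ∈ S.erase a, w t := (Finset.add_sum_erase S w ha).symm
    have h2 : ∑ t ∈ S.erase a, w t ≤ ((S.erase a).card : ℝ) := hsum_le _
    have h3 : ((S.erase a).card : ℝ) = (S.card : ℝ) - 1 := by
      rw [Finset.card_erase_of_mem ha]
      have h4 : 1 ≤ S.card := Finset.card_pos.mpr ⟨a, ha⟩
      push_cast [h4]
      ring
    rw [h1, hwa]
    linarith
  set E0 : Finset ℝ := if (1:ℝ) ∈ N then {(0:ℝ)} else ∅ with hE0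
  set E1 : Finset ℝ := if (0:ℝ) ∈ N then {(1:ℝ)} else ∅ with hE1
  set D : Finset ℝ := N ∪ E0 ∪ E1 with hD
  have hDsum : ∑ t ∈ D, w t ≤ (n : ℝ) := by
    by_cases h0 : (0:ℝ) ∈ N <;> by_cases h1 : (1:ℝ) ∈ N
    · -- both
      have hDN : D = N := by
        rw [hD, hE0, hE1, if_pos h1, if_pos h0]
        apply Finset.Subset.antisymm
        · intro t ht
          rcases Finset.mem_union.1 ht with ht' | ht'
          · rcases Finset.mem_union.1 ht' with h | h
            · exact h
            · rwa [Finset.mem_singleton.1 h]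
          · rwa [Finset.mem_singleton.1 ht']
        · intro t ht
          exact Finset.mem_union.2 (Or.inl (Finset.mem_union.2 (Or.inl ht)))
      rw [hDN]
      exact le_trans (hsum_le N) hNcard
    · -- 0 ∈ N, 1 ∉ N : D = N ∪ {1}
      have hDN : D = N ∪ {(1:ℝ)} := by
        rw [hD, hE0, hE1, if_neg h1, if_pos h0, Finset.union_empty]
      rw [hDN, Finset.sum_union (Finset.disjoint_singleton_right.mpr h1)]
      have hk := key N 0 h0 (by simp [hw])
      have hw1' : w 1 = 1/2 := by simp [hw]
      rw [Finset.sum_singleton, hw1']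
      linarith
    · -- 1 ∈ N, 0 ∉ N : D = N ∪ {0}
      have hDN : D = N ∪ {(0:ℝ)} := by
        rw [hD, hE0, hE1, if_pos h1, if_neg h0, Finset.union_empty]
      rw [hDN, Finset.sum_union (Finset.disjoint_singleton_right.mpr h0)]
      have hk := key N 1 h1 (by simp [hw])
      have hw0' : w 0 = 1/2 := by simp [hw]
      rw [Finset.sum_singleton, hw0']
      linarith
    · have hDN : D = N := by
        rw [hD, hE0, hE1, if_neg h1, if_neg h0, Finset.union_empty, Finset.union_empty]
      rw [hDN]
      exact le_trans (hsum_le N) hNcard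
  by_contra hcon
  push_neg at hcon
  have hTD : T ⊆ D := by
    intro t ht
    obtain ⟨j, hj⟩ := hcon t ht
    have htI : t ∈ Set.Icc (0:ℝ) 1 := hT ht
    have hyj : y j ∈ Set.Icc (0:ℝ) 1 := hy.2 j
    have hsI : t - y j ∈ Set.Icc (-1:ℝ) 1 := by
      constructor <;> [linarith [htI.1, hyj.2]; linarith [htI.2, hyj.1]]
    have hsing := kernel_bot_sing hK hsI hj
    rcases hsing.1 with h | h | h
    · -- t = 0, y j = 1
      have ht0 : t = 0 := by linarith [htI.1, hyj.2]
      have hyj1 : y j = 1 := by linarith [htI.1, hyj.2]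
      have h1N : (1:ℝ) ∈ N := by
        rw [hN]
        exact Finset.mem_image.2 ⟨j, Finset.mem_univ j, hyj1⟩
      rw [hD, hE0, if_pos h1N]
      exact Finset.mem_union.2 (Or.inl (Finset.mem_union.2 (Or.inr (by simp [ht0]))))
    · -- t = y j
      have : t = y j := by linarith
      have htN : t ∈ N := by
        rw [hN]
        exact Finset.mem_image.2 ⟨j, Finset.mem_univ j, this.symm⟩
      exact Finset.mem_union.2 (Or.inl (Finset.mem_union.2 (Or.inl htN)))
    · -- t = 1, y j = 0
      have ht1 : t = 1 := by linarith [htI.2, hyj.1]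
      have hyj0 : y j = 0 := by linarith [htI.2, hyj.1]
      have h0N : (0:ℝ) ∈ N := by
        rw [hN]
        exact Finset.mem_image.2 ⟨j, Finset.mem_univ j, hyj0⟩
      rw [hD, hE1, if_pos h0N]
      exact Finset.mem_union.2 (Or.inr (by simp [ht1]))
  have hTsum : ∑ t ∈ T, w t ≤ ∑ t ∈ D, w t :=
    Finset.sum_le_sum_of_subset_of_nonneg hTD (fun i _ _ => hw0 i)
  rw [hw] at hTsum
  have := lt_of_lt_of_le hTc hTsum
  have := lt_of_lt_of_le this hDsum
  exact lt_irrefl _ this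

end Helpers2


section Helpers3

open EReal

variable {K : ℝ → EReal} {n : ℕ} {ν : Fin n → ℝ} {J : ℝ → EReal}

lemma fsum_sum_eq_real {y : Fin n → ℝ} {t : ℝ}
    (hbot : ∀ j, K (t - y j) ≠ ⊥) (htop : ∀ j, K (t - y j) ≠ ⊤) :
    ∑ j, (ν j : EReal) * K (t - y j)
      = ((∑ j, ν j * (K (t - y j)).toReal : ℝ) : EReal) := by
  rw [ereal_coe_sum]
  refine Finset.sum_congr rfl (fun j _ => ?_)
  rw [EReal.coe_mul, EReal.coe_toReal (htop j) (hbot j)]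

lemma fsum_cwa (hK : IsKernelFunction K) (hν : ∀ i, 0 < ν i)
    (hJtop : ∀ t ∈ Set.Icc (0:ℝ) 1, J t ≠ ⊤) {t₀ : ℝ} (ht₀ : t₀ ∈ Set.Icc (0:ℝ) 1)
    {y₀ : Fin n → ℝ} (hy₀ : y₀ ∈ simplex n) :
    ContinuousWithinAt (fun y => Fsum K ν J y t₀) (simplex n) y₀ := by
  have hmem : ∀ (y : Fin n → ℝ), y ∈ simplex n → ∀ j, t₀ - y j ∈ Set.Icc (-1:ℝ) 1 := by
    intro y hy j
    have h1 := hy.2 j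
    constructor
    · linarith [ht₀.1, h1.2]
    · linarith [ht₀.2, h1.1]
  have hterm : ∀ j : Fin n, ContinuousWithinAt
      (fun y : Fin n → ℝ => (ν j : EReal) * K (t₀ - y j)) (simplex n) y₀ := by
    intro j
    have hc : ContinuousWithinAt (fun y : Fin n → ℝ => t₀ - y j) (simplex n) y₀ :=
      (continuous_const.sub (continuous_apply j)).continuousWithinAt
    have hmap : Set.MapsTo (fun y : Fin n → ℝ => t₀ - y j) (simplex n)
        (Set.Icc (-1:ℝ) 1) := fun y hy => hmem y hy j
    have hKc : ContinuousWithinAt (K ∘ (fun y : Fin n → ℝ => t₀ - y j)) (simplex n) y₀ :=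
      ContinuousWithinAt.comp ((kernel_continuousOn hK) _ (hmem y₀ hy₀ j)) hc hmap
    have h5 := ((ereal_continuous_const_mul
      (ne_of_gt (hν j))).continuousAt).comp_continuousWithinAt hKc
    exact h5
  have hterm_top : ∀ j : Fin n, (ν j : EReal) * K (t₀ - y₀ j) ≠ ⊤ :=
    fun j => ereal_pos_mul_ne_top (hν j) (hK.1 _ (hmem y₀ hy₀ j))
  have hsum := ereal_cwa_sum Finset.univ (fun j _ => hterm j) (fun j _ => hterm_top j)
  exact ereal_cwa_add
    (continuousWithinAt_const : ContinuousWithinAt (fun _ => J t₀) (simplex n) y₀)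
    hsum (hJtop t₀ ht₀) (ereal_sum_ne_top _ _ (fun j _ => hterm_top j))

lemma fsum_le_bound (hν : ∀ i, 0 ≤ ν i) {C B : ℝ}
    (hC : ∀ t ∈ Set.Icc (0:ℝ) 1, J t ≤ (C : EReal))
    (hB : ∀ s ∈ Set.Icc (-1:ℝ) 1, K s ≤ (B : EReal))
    {y : Fin n → ℝ} (hy : y ∈ simplex n) {t : ℝ} (ht : t ∈ Set.Icc (0:ℝ) 1) :
    Fsum K ν J y t ≤ ((C + ∑ i, ν i * B : ℝ) : EReal) := by
  have hmem : ∀ j, t - y j ∈ Set.Icc (-1:ℝ) 1 := by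
    intro j
    have h1 := hy.2 j
    constructor
    · linarith [ht.1, h1.2]
    · linarith [ht.2, h1.1]
  have h1 : ∑ j, (ν j : EReal) * K (t - y j) ≤ ((∑ i, ν i * B : ℝ) : EReal) := by
    rw [ereal_coe_sum]
    refine Finset.sum_le_sum (fun j _ => ?_)
    rw [EReal.coe_mul]
    exact mul_le_mul_of_nonneg_left (hB _ (hmem j)) (by exact_mod_cast hν j)
  calc Fsum K ν J y t ≤ (C : EReal) + ((∑ i, ν i * B : ℝ) : EReal) :=
        add_le_add (hC t ht) h1
    _ = _ := by rw [← EReal.coe_add]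

end Helpers3

/-- The global maximum function `m̄(y) = sup_{[0,1]} F(y,·)` is real-valued and
continuous on the closed simplex. -/
theorem mbar_realValued_continuousOn (n : ℕ) (hn : 0 < n)
    (K : ℝ → EReal) (hK : IsKernelFunction K)
    (ν : Fin n → ℝ) (hν : ∀ i, 0 < ν i)
    (J : ℝ → EReal) (hJ : IsFieldFunction n J) :
    ContinuousOn (fun y => sSup (Fsum K ν J y '' Set.Icc (0:ℝ) 1)) (simplex n) ∧
    ∀ y ∈ simplex n,
      sSup (Fsum K ν J y '' Set.Icc (0:ℝ) 1) ≠ ⊥ ∧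
      sSup (Fsum K ν J y '' Set.Icc (0:ℝ) 1) ≠ ⊤ := by
  classical
  obtain ⟨hJtop, ⟨C, hC⟩, T, hTsub, hTbot, hTcard⟩ := hJ
  obtain ⟨B, hB0, hB⟩ := kernel_bddAbove hK
  have hν0 : ∀ i, 0 ≤ ν i := fun i => (hν i).le
  have hmemIcc : ∀ (y : Fin n → ℝ), y ∈ simplex n → ∀ (t : ℝ), t ∈ Set.Icc (0:ℝ) 1 →
      ∀ j, t - y j ∈ Set.Icc (-1:ℝ) 1 := by
    intro y hy t ht j
    have h1 := hy.2 j
    constructor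
    · linarith [ht.1, h1.2]
    · linarith [ht.2, h1.1]
  have hfin : ∀ y ∈ simplex n,
      sSup (Fsum K ν J y '' Set.Icc (0:ℝ) 1) ≠ ⊥ ∧
      sSup (Fsum K ν J y '' Set.Icc (0:ℝ) 1) ≠ ⊤ := by
    intro y hy
    constructor
    · obtain ⟨t, htT, htK⟩ := exists_good_t hK hy hTsub hTcard
      have htI : t ∈ Set.Icc (0:ℝ) 1 := hTsub htT
      have htKtop : ∀ j, K (t - y j) ≠ ⊤ := fun j => hK.1 _ (hmemIcc y hy t htI j)
      have hFne : Fsum K ν J y t ≠ ⊥ := by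
        unfold Fsum
        rw [fsum_sum_eq_real htK htKtop, Ne, EReal.add_eq_bot_iff]
        push_neg
        exact ⟨hTbot t htT, EReal.coe_ne_bot _⟩
      intro hbot
      have hle : Fsum K ν J y t ≤ sSup (Fsum K ν J y '' Set.Icc (0:ℝ) 1) :=
        le_sSup ⟨t, htI, rfl⟩
      rw [hbot, le_bot_iff] at hle
      exact hFne hle
    · have h1 : sSup (Fsum K ν J y '' Set.Icc (0:ℝ) 1)
          ≤ ((C + ∑ i, ν i * B : ℝ) : EReal) := by
        refine sSup_le ?_
        rintro x ⟨t, ht, rfl⟩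
        exact fsum_le_bound hν0 hC hB hy ht
      exact ne_top_of_le_ne_top (EReal.coe_ne_top _) h1
  refine ⟨?_, hfin⟩
  intro y₀ hy₀
  set mb : (Fin n → ℝ) → EReal := fun y => sSup (Fsum K ν J y '' Set.Icc (0:ℝ) 1) with hmb
  have hfb := (hfin y₀ hy₀).1
  have hft := (hfin y₀ hy₀).2
  set r₀ : ℝ := (mb y₀).toReal with hr₀
  have hcoer : ((r₀ : ℝ) : EReal) = mb y₀ := EReal.coe_toReal hft hfb
  have hest : ∀ ε : ℝ, 0 < ε → ∀ᶠ y in nhdsWithin y₀ (simplex n),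
      mb y ≤ ((r₀ + ε : ℝ) : EReal) ∧ ((r₀ - ε : ℝ) : EReal) < mb y := by
    intro ε hε
    have hlow : ∀ᶠ y in nhdsWithin y₀ (simplex n), ((r₀ - ε : ℝ) : EReal) < mb y := by
      have hlt : ((r₀ - ε : ℝ) : EReal) < mb y₀ := by
        rw [← hcoer]
        exact_mod_cast sub_lt_self r₀ hε
      obtain ⟨x, hxmem, hx⟩ := lt_sSup_iff.mp hlt
      obtain ⟨t₀, ht₀, rfl⟩ := hxmem
      have hcwa := fsum_cwa hK hν hJtop ht₀ hy₀
      have hev := hcwa (isOpen_Ioi.mem_nhds hx)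
      rw [Filter.mem_map] at hev
      filter_upwards [hev] with y hy1
      exact lt_of_lt_of_le hy1 (le_sSup ⟨t₀, ht₀, rfl⟩)
    have hupp : ∀ᶠ y in nhdsWithin y₀ (simplex n), mb y ≤ ((r₀ + ε : ℝ) : EReal) := by
      have hne : (Finset.univ : Finset (Fin n)).Nonempty := ⟨⟨0, hn⟩, Finset.mem_univ _⟩
      set νmin : ℝ := Finset.univ.inf' hne ν with hνmin
      have hνminpos : 0 < νmin := (Finset.lt_inf'_iff hne).2 (fun i _ => hν i)
      have hνminle : ∀ j, νmin ≤ ν j := fun j => Finset.inf'_le ν (Finset.mem_univ j)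
      set Sν : ℝ := ∑ i, ν i with hSν
      have hSν0 : 0 ≤ Sν := Finset.sum_nonneg (fun i _ => hν0 i)
      set M : ℝ := max ((C + Sν * B - r₀) / νmin) 0 with hM
      have hM0 : 0 ≤ M := le_max_right _ _
      have hMkey : C + Sν * B - νmin * M ≤ r₀ := by
        have h1 : (C + Sν * B - r₀) / νmin ≤ M := le_max_left _ _
        rw [div_le_iff₀ hνminpos] at h1
        nlinarith
      obtain ⟨η, hη, hsmall⟩ := kernel_small_all hK M
      set ε' : ℝ := ε / (Sν + 1) with hε'
      have hε'pos : 0 < ε' := div_pos hε (by linarith)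
      obtain ⟨δ, hδ, hδη, hunif⟩ := kernel_unif hK hε'pos hη
      have hSε : Sν * ε' ≤ ε := by
        have h1 : Sν * ε' ≤ (Sν + 1) * ε' := by nlinarith [hε'pos.le]
        have h2 : (Sν + 1) * ε' = ε := by
          rw [hε']
          field_simp
        linarith
      refine Metric.mem_nhdsWithin_iff.2 ⟨δ, hδ, ?_⟩
      rintro y ⟨hyball, hysimp⟩
      rw [Metric.mem_ball] at hyball
      show mb y ≤ ((r₀ + ε : ℝ) : EReal)
      refine sSup_le ?_
      rintro x ⟨t, ht, rfl⟩
      by_cases hbad : ∃ j, ∃ z, KSing K z ∧ |t - y j - z| < η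
      · obtain ⟨j, z, hz, hltz⟩ := hbad
        have hKj : K (t - y j) ≤ ((-M : ℝ) : EReal) :=
          hsmall _ (hmemIcc y hysimp t ht j) z hz hltz
        have hterm : ∀ i : Fin n, (ν i : EReal) * K (t - y i)
            ≤ (((if i = j then ν i * (-M) else ν i * B) : ℝ) : EReal) := by
          intro i
          by_cases hij : i = j
          · subst hij
            rw [if_pos rfl, EReal.coe_mul]
            exact mul_le_mul_of_nonneg_left hKj (by exact_mod_cast hν0 i)
          · rw [if_neg hij, EReal.coe_mul]
            exact mul_le_mul_of_nonneg_left (hB _ (hmemIcc y hysimp t ht i))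
              (by exact_mod_cast hν0 i)
        have hsum : ∑ i, (ν i : EReal) * K (t - y i)
            ≤ ((∑ i, (if i = j then ν i * (-M) else ν i * B) : ℝ) : EReal) := by
          rw [ereal_coe_sum]
          exact Finset.sum_le_sum (fun i _ => hterm i)
        have hreal : (∑ i, (if i = j then ν i * (-M) else ν i * B))
            ≤ νmin * (-M) + Sν * B := by
          rw [← Finset.add_sum_erase _ _ (Finset.mem_univ j), if_pos rfl]
          have h2 : ∑ i ∈ Finset.univ.erase j, (if i = j then ν i * (-M) else ν i * B)
              = ∑ i ∈ Finset.univ.erase j, ν i * B :=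
            Finset.sum_congr rfl (fun i hi => if_neg (Finset.mem_erase.1 hi).1)
          rw [h2]
          have h3 : ∑ i ∈ Finset.univ.erase j, ν i * B ≤ ∑ i, ν i * B :=
            Finset.sum_le_sum_of_subset_of_nonneg (Finset.subset_univ _)
              (fun i _ _ => mul_nonneg (hν0 i) hB0)
          have h4 : ∑ i, ν i * B = Sν * B := by rw [hSν, Finset.sum_mul]
          have h5 : ν j * (-M) ≤ νmin * (-M) :=
            mul_le_mul_of_nonpos_right (hνminle j) (neg_nonpos.2 hM0)
          linarith
        have hcc : ((∑ i, (if i = j then ν i * (-M) else ν i * B) : ℝ) : EReal)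
            ≤ ((νmin * (-M) + Sν * B : ℝ) : EReal) := EReal.coe_le_coe_iff.2 hreal
        calc Fsum K ν J y t
            ≤ (C : EReal) + ((νmin * (-M) + Sν * B : ℝ) : EReal) :=
              add_le_add (hC t ht) (le_trans hsum hcc)
          _ = ((C + (νmin * (-M) + Sν * B) : ℝ) : EReal) := by rw [← EReal.coe_add]
          _ ≤ ((r₀ + ε : ℝ) : EReal) := by
              apply EReal.coe_le_coe_iff.2
              have h6 : νmin * (-M) = -(νmin * M) := by ring
              linarith
      · push_neg at hbad
        have hj : ∀ j : Fin n, K (t - y₀ j) ≠ ⊥ ∧ K (t - y₀ j) ≠ ⊤ ∧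
            K (t - y j) ≤ (((K (t - y₀ j)).toReal + ε' : ℝ) : EReal) := by
          intro j
          refine hunif _ (hmemIcc y hysimp t ht j) _ (hmemIcc y₀ hy₀ t ht j)
            (fun z hz => hbad j z hz) ?_
          have h1 : |(t - y j) - (t - y₀ j)| = |y j - y₀ j| := by
            rw [abs_sub_comm]
            congr 1
            ring
          rw [h1]
          calc |y j - y₀ j| = dist (y j) (y₀ j) := (Real.dist_eq _ _).symm
            _ ≤ dist y y₀ := dist_le_pi_dist y y₀ j
            _ < δ := hyball
        have hsum : ∑ i, (ν i : EReal) * K (t - y i)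
            ≤ ((∑ i, ν i * ((K (t - y₀ i)).toReal + ε') : ℝ) : EReal) := by
          rw [ereal_coe_sum]
          refine Finset.sum_le_sum (fun i _ => ?_)
          rw [EReal.coe_mul]
          exact mul_le_mul_of_nonneg_left (hj i).2.2 (by exact_mod_cast hν0 i)
        have hsplit : (∑ i, ν i * ((K (t - y₀ i)).toReal + ε'))
            = (∑ i, ν i * (K (t - y₀ i)).toReal) + Sν * ε' := by
          rw [hSν, Finset.sum_mul, ← Finset.sum_add_distrib]
          exact Finset.sum_congr rfl (fun i _ => by ring)
        have hF0 : Fsum K ν J y₀ t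
            = J t + ((∑ i, ν i * (K (t - y₀ i)).toReal : ℝ) : EReal) := by
          unfold Fsum
          rw [fsum_sum_eq_real (fun i => (hj i).1) (fun i => (hj i).2.1)]
        calc Fsum K ν J y t
            ≤ J t + ((∑ i, ν i * ((K (t - y₀ i)).toReal + ε') : ℝ) : EReal) :=
              add_le_add le_rfl hsum
          _ = (J t + ((∑ i, ν i * (K (t - y₀ i)).toReal : ℝ) : EReal))
              + ((Sν * ε' : ℝ) : EReal) := by
              rw [hsplit, EReal.coe_add, add_assoc]
          _ ≤ mb y₀ + ((ε : ℝ) : EReal) := by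
              refine add_le_add ?_ (EReal.coe_le_coe_iff.2 hSε)
              rw [← hF0]
              exact le_sSup ⟨t, ht, rfl⟩
          _ = ((r₀ + ε : ℝ) : EReal) := by rw [← hcoer, ← EReal.coe_add]
    filter_upwards [hupp, hlow] with y h1 h2 using ⟨h1, h2⟩
  have htend : Filter.Tendsto (fun y => (((mb y).toReal : ℝ) : EReal))
      (nhdsWithin y₀ (simplex n)) (nhds (mb y₀)) := by
    rw [← hcoer, EReal.tendsto_coe, Metric.tendsto_nhds]
    intro ε2 hε2
    have h2 := hest (ε2 / 2) (by linarith)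
    filter_upwards [h2, self_mem_nhdsWithin] with y hy1 hy2
    have hyb := (hfin y hy2).1
    have hyt := (hfin y hy2).2
    have hle1 : (mb y).toReal ≤ r₀ + ε2 / 2 := by
      have h3 := EReal.toReal_le_toReal hy1.1 hyb (EReal.coe_ne_top _)
      rwa [EReal.toReal_coe] at h3
    have hle2 : r₀ - ε2 / 2 ≤ (mb y).toReal := by
      have h3 := EReal.toReal_le_toReal hy1.2.le (EReal.coe_ne_bot _) hyt
      rwa [EReal.toReal_coe] at h3
    rw [Real.dist_eq, abs_sub_lt_iff]
    constructor <;> linarith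
  have heq : ∀ᶠ y in nhdsWithin y₀ (simplex n),
      (((mb y).toReal : ℝ) : EReal) = mb y := by
    filter_upwards [self_mem_nhdsWithin] with y hy2
    exact EReal.coe_toReal (hfin y hy2).2 (hfin y hy2).1
  exact Filter.Tendsto.congr' heq htend
end
end

section
/- Let $K$ be a nonsingular monotone kernel function (hence real-valued), $n \in \mathbb{N}$, $\nu_1,\dots,\nu_n > 0$, and let $J$ be a lower semicontinuous $n$-field function. Then for each $j \in \{0,1,\dots,n\}$ the interval maximum function $m_j(\mathbf{y}) := \sup_{t \in [y_j,y_{j+1}]} F(\mathbf{y},t)$ is lower semicontinuous on $\overline{S}$. -/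
open Set Filter
open Topology

noncomputable section

lemma node_mem_Icc {n : ℕ} {y : Fin n → ℝ} (hy : y ∈ simplex n) (j : ℕ) :
    node y j ∈ Set.Icc (0:ℝ) 1 := by
  unfold node
  split_ifs with h1 h2
  · exact hy.2 _
  · exact ⟨le_refl 0, zero_le_one⟩
  · exact ⟨zero_le_one, le_refl 1⟩

lemma node_le_node_succ {n : ℕ} {y : Fin n → ℝ} (hy : y ∈ simplex n) {j : ℕ} (hj : j ≤ n) :
    node y j ≤ node y (j + 1) := by
  unfold node
  split_ifs with h1 h2 h3 h4 h5 h6 <;>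
    first
      | omega
      | exact hy.1 (by simp only [Fin.mk_le_mk]; omega)
      | exact (hy.2 _).2
      | exact (hy.2 _).1
      | exact zero_le_one
      | exact False.elim (by assumption)
      | norm_num

lemma continuous_node {n : ℕ} (j : ℕ) : Continuous (fun y : Fin n → ℝ => node y j) := by
  unfold node
  split_ifs
  · exact continuous_apply _
  · exact continuous_const
  · exact continuous_const

lemma kernel_toReal_continuousOn {K : ℝ → EReal} (hK : IsKernelFunction K)
    (hKfin : ∀ t ∈ Set.Icc (-1:ℝ) 1, K t ≠ ⊥) :
    ContinuousOn (fun x => (K x).toReal) (Set.Icc (-1:ℝ) 1) := by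
  obtain ⟨hTop, -, -, hc1, hc2, h0l, h0r, hm1, h1⟩ := hK
  set k := fun x => (K x).toReal with hk
  have tendK : ∀ x : ℝ, x ∈ Set.Icc (-1:ℝ) 1 → ∀ s : Set ℝ,
      Tendsto K (𝓝[s] x) (𝓝 (K x)) → ContinuousWithinAt k s x := by
    intro x hx s hs
    exact (EReal.tendsto_toReal (hTop x hx) (hKfin x hx)).comp hs
  have hA : ContinuousOn k (Set.Ioo (-1:ℝ) 0) := hc1.continuousOn isOpen_Ioo
  have hB : ContinuousOn k (Set.Ioo (0:ℝ) 1) := hc2.continuousOn isOpen_Ioo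
  intro x hx
  rcases eq_or_lt_of_le hx.1 with h₁ | h₁
  · -- x = -1
    subst h₁
    exact ((tendK _ hx _ hm1).insert.mono (by
      intro z hz
      rcases eq_or_lt_of_le hz.1 with h | h
      · exact Or.inl h.symm
      · exact Or.inr h))
  rcases eq_or_lt_of_le hx.2 with h₂ | h₂
  · -- x = 1
    subst h₂
    exact ((tendK _ hx _ h1).insert.mono (by
      intro z hz
      rcases eq_or_lt_of_le hz.2 with h | h
      · exact Or.inl h
      · exact Or.inr h))
  rcases lt_trichotomy x 0 with h0 | h0 | h0
  · exact ((hA.continuousAt (Ioo_mem_nhds h₁ h0)).continuousWithinAt)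
  · subst h0
    have : ContinuousWithinAt k (Set.Iio 0 ∪ Set.Ioi 0) 0 :=
      (tendK _ hx _ h0l).union (tendK _ hx _ h0r)
    exact this.insert.mono (by
      intro z _
      rcases lt_trichotomy z 0 with h | h | h
      · exact Or.inr (Or.inl h)
      · exact Or.inl h
      · exact Or.inr (Or.inr h))
  · exact ((hB.continuousAt (Ioo_mem_nhds h0 h₂)).continuousWithinAt)

lemma ereal_coe_finset_sum {α : Type*} (s : Finset α) (f : α → ℝ) :
    ((∑ i ∈ s, f i : ℝ) : EReal) = ∑ i ∈ s, ((f i : ℝ) : EReal) := by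
  induction s using Finset.cons_induction with
  | empty => simp
  | cons a s ha ih => rw [Finset.sum_cons, Finset.sum_cons, EReal.coe_add, ih]

/-- Lower semicontinuity of the interval maxima `m_j` for a nonsingular (real-valued)
monotone kernel and a lower semicontinuous field. -/
theorem mj_lowerSemicontinuousOn (n : ℕ) (hn : 0 < n)
    (K : ℝ → EReal) (hK : IsMonotoneKernel K)
    (hKfin : ∀ t ∈ Set.Icc (-1:ℝ) 1, K t ≠ ⊥)
    (ν : Fin n → ℝ) (hν : ∀ i, 0 < ν i)
    (J : ℝ → EReal) (hJ : IsFieldFunction n J)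
    (hJlsc : LowerSemicontinuousOn J (Set.Icc (0:ℝ) 1)) :
    ∀ j ≤ n, LowerSemicontinuousOn (fun y => mj K ν J y j) (simplex n) := by
  intro j hj y hy b hb
  set k : ℝ → ℝ := fun x => (K x).toReal with hkdef
  have hkcont : ContinuousOn k (Set.Icc (-1:ℝ) 1) := kernel_toReal_continuousOn hK.1 hKfin
  have hKcoe : ∀ x ∈ Set.Icc (-1:ℝ) 1, K x = ((k x : ℝ) : EReal) := fun x hx =>
    (EReal.coe_toReal (hK.1.1 x hx) (hKfin x hx)).symm
  -- pick t₀
  obtain ⟨u, ⟨t₀, ht₀, rfl⟩, hbu⟩ := lt_sSup_iff.mp hb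
  have ht₀01 : t₀ ∈ Set.Icc (0:ℝ) 1 :=
    ⟨(node_mem_Icc hy j).1.trans ht₀.1, ht₀.2.trans (node_mem_Icc hy (j+1)).2⟩
  have hsub : ∀ i : Fin n, t₀ - y i ∈ Set.Icc (-1:ℝ) 1 := by
    intro i
    have := hy.2 i
    constructor <;> [linarith [ht₀01.1, this.2]; linarith [ht₀01.2, this.1]]
  -- F(y,t₀) as a real
  set S : ℝ := ∑ i, ν i * k (t₀ - y i) with hS
  have hFsum : Fsum K ν J y t₀ = J t₀ + (S : EReal) := by
    unfold Fsum
    congr 1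
    rw [hS, ereal_coe_finset_sum]
    exact Finset.sum_congr rfl fun i _ => by
      rw [hKcoe _ (hsub i), ← EReal.coe_mul]
  have hJt₀top : J t₀ ≠ ⊤ := hJ.1 t₀ ht₀01
  have hJt₀bot : J t₀ ≠ ⊥ := by
    intro h
    rw [hFsum, h, EReal.bot_add] at hbu
    exact not_lt_bot hbu
  set Jr : ℝ := (J t₀).toReal with hJr
  have hJcoe : J t₀ = (Jr : EReal) := (EReal.coe_toReal hJt₀top hJt₀bot).symm
  have hFr : Fsum K ν J y t₀ = ((Jr + S : ℝ) : EReal) := by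
    rw [hFsum, hJcoe, EReal.coe_add]
  -- choose intermediate real c
  obtain ⟨c, hbc, hcF⟩ := exists_between hbu
  rw [hFr] at hcF
  have hcbot : c ≠ ⊥ := fun h => not_lt_bot (h ▸ hbc)
  have hctop : c ≠ ⊤ := fun h => not_top_lt (h ▸ hcF)
  set cr : ℝ := c.toReal with hcr
  have hccoe : c = (cr : EReal) := (EReal.coe_toReal hctop hcbot).symm
  have hcrlt : cr < Jr + S := by
    rw [hccoe, EReal.coe_lt_coe_iff] at hcF; exact hcF
  set δ : ℝ := (Jr + S - cr) / 2 with hδ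
  have hδpos : 0 < δ := by rw [hδ]; linarith
  -- the clamped point
  set T : (Fin n → ℝ) → ℝ := fun y' => max (node y' j) (min t₀ (node y' (j+1))) with hT
  have hTy : T y = t₀ := by
    rw [hT]; simp only
    rw [min_eq_left ht₀.2, max_eq_right ht₀.1]
  have hTcont : Continuous T := (continuous_node j).max (continuous_const.min (continuous_node (j+1)))
  have hTmem : ∀ y' ∈ simplex n, T y' ∈ Set.Icc (node y' j) (node y' (j+1)) := by
    intro y' hy'
    exact ⟨le_max_left _ _, max_le (node_le_node_succ hy' hj) (min_le_right _ _)⟩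
  have hT01 : ∀ y' ∈ simplex n, T y' ∈ Set.Icc (0:ℝ) 1 := by
    intro y' hy'
    exact ⟨(node_mem_Icc hy' j).1.trans (hTmem y' hy').1,
      (hTmem y' hy').2.trans (node_mem_Icc hy' (j+1)).2⟩
  have hTtend : Tendsto T (𝓝[simplex n] y) (𝓝[Set.Icc (0:ℝ) 1] t₀) := by
    rw [tendsto_nhdsWithin_iff]
    constructor
    · rw [← hTy]
      exact (hTcont.tendsto y).mono_left nhdsWithin_le_nhds
    · exact eventually_mem_nhdsWithin.mono fun y' hy' => hT01 y' hy'
  -- eventually J (T y') > Jr - δ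
  have hJev : ∀ᶠ y' in 𝓝[simplex n] y, ((Jr - δ : ℝ) : EReal) < J (T y') := by
    have : ((Jr - δ : ℝ) : EReal) < J t₀ := by
      rw [hJcoe, EReal.coe_lt_coe_iff]; linarith
    exact hTtend.eventually (hJlsc t₀ ht₀01 _ this)
  -- eventually the kernel sum > S - δ
  set G : (Fin n → ℝ) → ℝ := fun y' => ∑ i, ν i * k (T y' - y' i) with hG
  have hGtend : Tendsto G (𝓝[simplex n] y) (𝓝 S) := by
    rw [hS, hG]
    apply tendsto_finset_sum
    intro i _
    apply Tendsto.const_mul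
    have hu : Tendsto (fun y' : Fin n → ℝ => T y' - y' i) (𝓝[simplex n] y)
        (𝓝[Set.Icc (-1:ℝ) 1] (t₀ - y i)) := by
      rw [tendsto_nhdsWithin_iff]
      constructor
      · have : Continuous (fun y' : Fin n → ℝ => T y' - y' i) :=
          hTcont.sub (continuous_apply i)
        rw [← hTy]
        exact (this.tendsto y).mono_left nhdsWithin_le_nhds
      · refine eventually_mem_nhdsWithin.mono fun y' hy' => ?_
        have h1 := hT01 y' hy'
        have h2 := hy'.2 i
        constructor <;> [linarith [h1.1, h2.2]; linarith [h1.2, h2.1]]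
    exact (hkcont _ (hsub i)).tendsto.comp hu
  have hGev : ∀ᶠ y' in 𝓝[simplex n] y, S - δ < G y' :=
    hGtend.eventually (eventually_gt_nhds (by linarith))
  -- combine
  filter_upwards [hJev, hGev, eventually_mem_nhdsWithin] with y' hJ' hG' hy'
  refine lt_of_lt_of_le (lt_of_lt_of_le hbc ?_) (le_sSup ⟨T y', hTmem y' hy', rfl⟩)
  have hsub' : ∀ i : Fin n, T y' - y' i ∈ Set.Icc (-1:ℝ) 1 := by
    intro i
    have h1 := hT01 y' hy'
    have h2 := hy'.2 i
    constructor <;> [linarith [h1.1, h2.2]; linarith [h1.2, h2.1]]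
  have hF' : Fsum K ν J y' (T y') = J (T y') + (G y' : EReal) := by
    unfold Fsum
    congr 1
    rw [hG, ereal_coe_finset_sum]
    exact Finset.sum_congr rfl fun i _ => by
      rw [hKcoe _ (hsub' i), ← EReal.coe_mul]
  rw [hF', hccoe]
  have hcr2 : cr = (Jr - δ) + (S - δ) := by rw [hδ]; ring
  rw [hcr2, EReal.coe_add]
  exact EReal.add_lt_add hJ' (EReal.coe_lt_coe_iff.mpr hG') |>.le
end
end

section
/- Let $n \in \mathbb{N}$, $\nu_1,\dots,\nu_n > 0$, $K$ a kernel function, and $J$ an $n$-field function. Suppose there exists an equioscillation point $\mathbf{e} \in \overline{S}$, i.e., $m_0(\mathbf{e}) = m_1(\mathbf{e}) = \cdots = m_n(\mathbf{e}) =: \mu$, and suppose that strict majorization does not hold on the regularity set $Y$ (there are no $\mathbf{x}, \mathbf{y} \in Y$ with $m_j(\mathbf{x}) > m_j(\mathbf{y})$ for every $j$). Then $m(\overline{S}) := \sup_{\mathbf{y}\in\overline{S}} \min_{0\le j \le n} m_j(\mathbf{y}) = \mu$. -/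
open Set Filter

noncomputable section

section Aux

open Finset in
private lemma sum_biUnion_le_nonneg {ι α : Type*} [DecidableEq α] (s : Finset ι)
    (f : ι → Finset α) (w : α → ℝ) (hw : ∀ a, 0 ≤ w a) :
    ∑ a ∈ s.biUnion f, w a ≤ ∑ i ∈ s, ∑ a ∈ f i, w a := by
  classical
  induction s using Finset.induction with
  | empty => simp
  | insert _ _ h ih =>
    rename_i i s'
    rw [Finset.biUnion_insert, Finset.sum_insert h]
    have h1 : ∑ a ∈ f i ∪ s'.biUnion f, w a ≤
        (∑ a ∈ f i, w a) + ∑ a ∈ s'.biUnion f, w a := by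
      have := Finset.sum_union_inter (s₁ := f i) (s₂ := s'.biUnion f) (f := w)
      have hnn : 0 ≤ ∑ a ∈ f i ∩ s'.biUnion f, w a :=
        Finset.sum_nonneg fun a _ => hw a
      linarith
    exact h1.trans (by linarith)

private lemma ereal_sum_ne_bot {ι : Type*} (s : Finset ι) (f : ι → EReal)
    (h : ∀ i ∈ s, f i ≠ ⊥) : ∑ i ∈ s, f i ≠ ⊥ := by
  classical
  induction s using Finset.induction with
  | empty => simp
  | insert _ _ hns ih =>
    rename_i i s'
    rw [Finset.sum_insert hns, ne_eq, EReal.add_eq_bot_iff]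
    push_neg
    exact ⟨h i (Finset.mem_insert_self i s'),
      ih fun j hj => h j (Finset.mem_insert_of_mem hj)⟩

end Aux

/-- If an equioscillation point with value `μ` exists and strict majorization fails on
the regularity set, then the simplex maximin equals `μ`. -/
theorem maximin_eq_equioscillation_value (n : ℕ) (hn : 0 < n)
    (K : ℝ → EReal) (hK : IsKernelFunction K)
    (ν : Fin n → ℝ) (hν : ∀ i, 0 < ν i)
    (J : ℝ → EReal) (hJ : IsFieldFunction n J)
    (e : Fin n → ℝ) (he : e ∈ simplex n) (μ : EReal)
    (heq : ∀ j ≤ n, mj K ν J e j = μ)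
    (hnomaj : ¬ ∃ x ∈ regularitySet K ν J, ∃ y ∈ regularitySet K ν J,
      ∀ j ≤ n, mj K ν J y j < mj K ν J x j) :
    sSup ((fun y => ⨅ j : Fin (n + 1), mj K ν J y (j : ℕ)) '' simplex n) = μ := by
  classical
  obtain ⟨hJtop, -, T, hT01, hTne, hTsum⟩ := hJ
  obtain ⟨hKtop, hKneg, hKpos, -⟩ := hK
  -- Find a point of T avoiding all singularities
  have key : ∃ t ∈ T, ∀ j : Fin n,
      ¬(t = e j ∨ (t = 1 ∧ e j = 0) ∨ (t = 0 ∧ e j = 1)) := by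
    by_contra hcon
    push_neg at hcon
    set w : ℝ → ℝ := fun t => if t = 0 ∨ t = 1 then (1/2 : ℝ) else 1 with hwdef
    have hwnn : ∀ a, 0 ≤ w a := by
      intro a; simp only [hwdef]; split <;> norm_num
    set S : Fin n → Finset ℝ :=
      fun j => if e j = 0 ∨ e j = 1 then ({0, 1} : Finset ℝ) else {e j} with hSdef
    have hsub : T ⊆ Finset.univ.biUnion S := by
      intro t ht
      obtain ⟨j, hj⟩ := hcon t ht
      refine Finset.mem_biUnion.mpr ⟨j, Finset.mem_univ j, ?_⟩
      simp only [hSdef]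
      rcases hj with h | ⟨h1, h2⟩ | ⟨h1, h2⟩
      · by_cases hc : e j = 0 ∨ e j = 1
        · rw [if_pos hc]
          rcases hc with hc | hc <;> simp [h, hc]
        · rw [if_neg hc]; simp [h]
      · rw [if_pos (Or.inl h2)]; simp [h1]
      · rw [if_pos (Or.inr h2)]; simp [h1]
    have hSle : ∀ j : Fin n, ∑ a ∈ S j, w a ≤ 1 := by
      intro j
      simp only [hSdef]
      by_cases hc : e j = 0 ∨ e j = 1
      · rw [if_pos hc, Finset.sum_pair (by norm_num : (0:ℝ) ≠ 1)]
        have h0 : w 0 = 1/2 := if_pos (Or.inl rfl)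
        have h1 : w 1 = 1/2 := if_pos (Or.inr rfl)
        rw [h0, h1]; norm_num
      · rw [if_neg hc, Finset.sum_singleton]
        simp only [hwdef]
        rw [if_neg hc]
    have hcontra : (n : ℝ) < (n : ℝ) := by
      calc (n : ℝ) < ∑ t ∈ T, w t := hTsum
        _ ≤ ∑ t ∈ Finset.univ.biUnion S, w t :=
            Finset.sum_le_sum_of_subset_of_nonneg hsub (fun a _ _ => hwnn a)
        _ ≤ ∑ j, ∑ a ∈ S j, w a := sum_biUnion_le_nonneg _ _ _ hwnn
        _ ≤ ∑ _j : Fin n, (1 : ℝ) := Finset.sum_le_sum fun j _ => hSle j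
        _ = n := by simp
    exact lt_irrefl _ hcontra
  obtain ⟨t, htT, htgood⟩ := key
  have ht01 : t ∈ Set.Icc (0:ℝ) 1 := hT01 htT
  have hKfin : ∀ j : Fin n, K (t - e j) ≠ ⊥ ∧ K (t - e j) ≠ ⊤ := by
    intro j
    have hej := he.2 j
    have h1 := htgood j
    push_neg at h1
    obtain ⟨hne, hb, hc⟩ := h1
    have hd1 : t - e j ≤ 1 := by
      have := ht01.2; have := hej.1; linarith
    have hd2 : (-1 : ℝ) ≤ t - e j := by
      have := ht01.1; have := hej.2; linarith
    have hnetop : K (t - e j) ≠ ⊤ := hKtop _ ⟨hd2, hd1⟩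
    have hne0 : t - e j ≠ 0 := sub_ne_zero.mpr hne
    have hne1 : t - e j ≠ 1 := by
      intro h
      have h1' : t = 1 := by
        have := ht01.2; have := hej.1; linarith
      have h2' : e j = 0 := by
        have := ht01.2; have := hej.1; linarith
      exact hb h1' h2'
    have hnem1 : t - e j ≠ -1 := by
      intro h
      have h1' : t = 0 := by
        have := ht01.1; have := hej.2; linarith
      have h2' : e j = 1 := by
        have := ht01.1; have := hej.2; linarith
      exact hc h1' h2'
    rcases lt_trichotomy (t - e j) 0 with h | h | h
    · exact ⟨hKneg _ ⟨lt_of_le_of_ne hd2 (Ne.symm hnem1), h⟩, hnetop⟩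
    · exact absurd h hne0
    · exact ⟨hKpos _ ⟨h, lt_of_le_of_ne hd1 hne1⟩, hnetop⟩
  have hFne : Fsum K ν J e t ≠ ⊥ := by
    rw [Fsum, ne_eq, EReal.add_eq_bot_iff]
    push_neg
    refine ⟨hTne t htT, ereal_sum_ne_bot _ _ fun j _ => ?_⟩
    obtain ⟨hb, htp⟩ := hKfin j
    rw [← EReal.coe_toReal htp hb, ← EReal.coe_mul]
    exact EReal.coe_ne_bot _
  have hμbot : μ ≠ ⊥ := by
    set P : ℕ → Prop := fun j => node e j ≤ t with hP
    have hnode0 : node e 0 = 0 := by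
      rw [node, dif_neg (by omega)]; simp
    have hnoden : node e (n + 1) = 1 := by
      rw [node, dif_neg (by omega)]; simp
    have hP0 : P 0 := by rw [hP]; simpa [hnode0] using ht01.1
    have hj0 : P (Nat.findGreatest P n) := Nat.findGreatest_spec (Nat.zero_le n) hP0
    set j0 := Nat.findGreatest P n with hj0def
    have hj0n : j0 ≤ n := Nat.findGreatest_le n
    have hub : t ≤ node e (j0 + 1) := by
      by_cases hcase : j0 = n
      · rw [hcase, hnoden]; exact ht01.2
      · have hgt := Nat.findGreatest_is_greatest (P := P) (n := n) (k := j0 + 1)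
          (by omega) (by omega)
        exact le_of_not_ge hgt
    have hmem : Fsum K ν J e t ∈ Fsum K ν J e '' Set.Icc (node e j0) (node e (j0+1)) :=
      ⟨t, ⟨hj0, hub⟩, rfl⟩
    have hle : Fsum K ν J e t ≤ mj K ν J e j0 := le_sSup hmem
    rw [heq j0 hj0n] at hle
    exact fun h => hFne (le_bot_iff.mp (h ▸ hle))
  apply le_antisymm
  · refine sSup_le ?_
    rintro v ⟨y, hy, rfl⟩
    by_contra hlt
    push_neg at hlt
    have hy' : ∀ j, j ≤ n → μ < mj K ν J y j := fun j hj =>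
      lt_of_lt_of_le hlt (iInf_le _ (⟨j, by omega⟩ : Fin (n+1)))
    refine hnomaj ⟨y, ⟨hy, fun j hj hb => not_lt_bot (hb ▸ hy' j hj)⟩,
      e, ⟨he, fun j hj => by rw [heq j hj]; exact hμbot⟩,
      fun j hj => by rw [heq j hj]; exact hy' j hj⟩
  · refine le_sSup ⟨e, he, ?_⟩
    show (⨅ j : Fin (n+1), mj K ν J e (j : ℕ)) = μ
    have h : ∀ j : Fin (n+1), mj K ν J e (j : ℕ) = μ :=
      fun j => heq j (Nat.lt_succ_iff.mp j.isLt)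
    rw [iInf_congr h, iInf_const]
end
end
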